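/- arXiv:1903.05804 — 8 statements merged into one kernel-verified Lean document; each statement's English description precedes it below -/
import Mathlib

section
/- Fix reals T, B, L, N0 > 0 and c > 0, set k = (L/(B·T))·ln 2, and define σ(γ) = c²·γ·(γ+2) / ( (ln(1+γ) − k)²·(1+γ)²·B·T ) for γ in Γ = (2^{L/(B·T)} − 1, ∞). Then σ is strictly antitone on Γ: for all γ1, γ2 ∈ Γ with γ1 < γ2 one has σ(γ2) < σ(γ1). Consequently, writing Π(γ) = N0·B·σ(γ)·γ for the corresponding transmit power, the power per packet Π(γ)/σ(γ) = N0·B·γ strictly decreases as the number of packets σ(γ) increases: for γ1 < γ2 in Γ, σ(γ2) < σ(γ1) and Π(γ2)/σ(γ2) > Π(γ1)/σ(γ1). -/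
/-- The packets-per-slot function `σ` is strictly antitone on
`Γ = (2^{L/(B·T)} − 1, ∞)`, and the power per packet `Pw(γ)/σ(γ) = N0·B·γ` strictly
increases in `γ`, i.e. it strictly decreases as the number of packets `σ(γ)` increases.
(`Pw` plays the role of `Π` in the paper.) -/
theorem sigma_strict_antitone_power_per_packet
    (T B L N0 c k : ℝ)
    (hT : 0 < T) (hB : 0 < B) (hL : 0 < L) (hN0 : 0 < N0) (hc : 0 < c)
    (hk : k = (L / (B * T)) * Real.log 2)
    (σ Pw : ℝ → ℝ)
    (hσ : ∀ γ, σ γ = c ^ 2 * γ * (γ + 2) /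
        ((Real.log (1 + γ) - k) ^ 2 * (1 + γ) ^ 2 * B * T))
    (hPw : ∀ γ, Pw γ = N0 * B * σ γ * γ) :
    ∀ γ1 γ2 : ℝ, (2 : ℝ) ^ (L / (B * T)) - 1 < γ1 →
      (2 : ℝ) ^ (L / (B * T)) - 1 < γ2 → γ1 < γ2 →
      σ γ2 < σ γ1 ∧ Pw γ1 / σ γ1 < Pw γ2 / σ γ2 := by
  intro γ1 γ2 h1 h2 h12
  have hBT : 0 < B * T := mul_pos hB hT
  have hLBT : 0 < L / (B * T) := div_pos hL hBT
  set a : ℝ := (2 : ℝ) ^ (L / (B * T)) with ha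
  have ha1 : 1 < a := Real.one_lt_rpow_iff_of_pos two_pos |>.mpr (Or.inl ⟨one_lt_two, hLBT⟩)
  have hloga : Real.log a = k := by
    rw [ha, Real.log_rpow two_pos, hk]
  have hk0 : 0 < k := by
    rw [hk]; exact mul_pos hLBT (Real.log_pos one_lt_two)
  -- the auxiliary function g
  set g : ℝ → ℝ := fun x => (1 - (x ^ 2)⁻¹) / (Real.log x - k) ^ 2 with hg
  -- basic facts about points in (a, ∞)
  have hx_facts : ∀ x : ℝ, a < x → 1 < x ∧ 0 < Real.log x - k ∧ Real.log x - k < x ^ 2 - 1 := by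
    intro x hx
    have hx1 : 1 < x := lt_trans ha1 hx
    have hx0 : 0 < x := lt_trans one_pos hx1
    have hlog : k < Real.log x := by
      rw [← hloga]
      exact Real.log_lt_log (lt_trans one_pos ha1) hx
    have h2 : Real.log x < x - 1 := Real.log_lt_sub_one_of_pos hx0 (ne_of_gt hx1)
    have h3 : x - 1 ≤ x ^ 2 - 1 := by nlinarith
    exact ⟨hx1, by linarith, by linarith⟩
  -- derivative of g on (a, ∞)
  have hderiv : ∀ x : ℝ, a < x →
      HasDerivAt g (((2 * x / (x ^ 2) ^ 2) * (Real.log x - k) ^ 2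
        - (1 - (x ^ 2)⁻¹) * (2 * (Real.log x - k) ^ 1 * (1 / x))) / ((Real.log x - k) ^ 2) ^ 2) x := by
    intro x hx
    obtain ⟨hx1, ht0, _⟩ := hx_facts x hx
    have hx0 : (0:ℝ) < x := lt_trans one_pos hx1
    have hxne : x ≠ 0 := ne_of_gt hx0
    have hu : HasDerivAt (fun y : ℝ => 1 - (y ^ 2)⁻¹) (2 * x / (x ^ 2) ^ 2) x := by
      have h1 : HasDerivAt (fun y : ℝ => (y ^ 2)⁻¹) (-(2 * x ^ 1) / (x ^ 2) ^ 2) x := by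
        have := (hasDerivAt_pow 2 x)
        simpa using this.fun_inv (pow_ne_zero 2 hxne)
      have := h1.const_sub 1
      simpa [neg_div] using this
    have hv : HasDerivAt (fun y : ℝ => (Real.log y - k) ^ 2)
        (2 * (Real.log x - k) ^ 1 * (1 / x)) x := by
      have hlog : HasDerivAt (fun y : ℝ => Real.log y - k) (1 / x) x := by
        simpa using (Real.hasDerivAt_log hxne).sub_const k
      simpa using hlog.fun_pow 2
    exact hu.div hv (by positivity)
  -- g is strictly antitone on (a, ∞)
  have hanti : StrictAntiOn g (Set.Ioi a) := by
    apply strictAntiOn_of_deriv_neg (convex_Ioi a)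
    · intro x hx
      exact (hderiv x hx).continuousAt.continuousWithinAt
    · intro x hx
      rw [interior_Ioi] at hx
      rw [(hderiv x hx).deriv]
      obtain ⟨hx1, ht0, ht1⟩ := hx_facts x hx
      have hx0 : (0:ℝ) < x := lt_trans one_pos hx1
      apply div_neg_of_neg_of_pos
      · have key : (2 * x / (x ^ 2) ^ 2) * (Real.log x - k) ^ 2
            - (1 - (x ^ 2)⁻¹) * (2 * (Real.log x - k) ^ 1 * (1 / x))
            = (2 * (Real.log x - k) / x ^ 3) * ((Real.log x - k) - (x ^ 2 - 1)) := by
          field_simp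
        rw [key]
        apply mul_neg_of_pos_of_neg
        · positivity
        · linarith
      · positivity
  -- rewrite σ in terms of g
  have hσg : ∀ γ : ℝ, a - 1 < γ → σ γ = (c ^ 2 / (B * T)) * g (1 + γ) := by
    intro γ hγ
    have hx : a < 1 + γ := by linarith
    obtain ⟨hx1, ht0, _⟩ := hx_facts (1 + γ) hx
    have hxne : (1 + γ) ≠ 0 := by linarith
    have htne : Real.log (1 + γ) - k ≠ 0 := ne_of_gt ht0
    rw [hσ, hg]
    field_simp
    ring
  -- σ positive on Γ
  have hσpos : ∀ γ : ℝ, a - 1 < γ → 0 < σ γ := by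
    intro γ hγ
    have hγ0 : 0 < γ := lt_of_le_of_lt (by linarith) hγ
    have hx : a < 1 + γ := by linarith
    obtain ⟨hx1, ht0, _⟩ := hx_facts (1 + γ) hx
    rw [hσ]
    apply div_pos
    · positivity
    · positivity
  have hmem1 : (1 + γ1) ∈ Set.Ioi a := by simp only [Set.mem_Ioi]; linarith
  have hmem2 : (1 + γ2) ∈ Set.Ioi a := by simp only [Set.mem_Ioi]; linarith
  have hglt : g (1 + γ2) < g (1 + γ1) := hanti hmem1 hmem2 (by linarith)
  have hσlt : σ γ2 < σ γ1 := by
    rw [hσg γ1 h1, hσg γ2 h2]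
    exact mul_lt_mul_of_pos_left hglt (by positivity)
  refine ⟨hσlt, ?_⟩
  have hs1 := hσpos γ1 h1
  have hs2 := hσpos γ2 h2
  have hγ10 : 0 < γ1 := lt_of_le_of_lt (by linarith) h1
  have e1 : Pw γ1 / σ γ1 = N0 * B * γ1 := by
    rw [hPw]; field_simp
  have e2 : Pw γ2 / σ γ2 = N0 * B * γ2 := by
    rw [hPw]; field_simp
  rw [e1, e2]
  have := mul_pos hN0 hB
  nlinarith
end

section
/- Fix reals T, B, L, N0 > 0 and c > 0, set k = (L/(B·T))·ln 2, and on Γ = (2^{L/(B·T)} − 1, ∞) define σ(γ) = c²·γ·(γ+2) / ( (ln(1+γ) − k)²·(1+γ)²·B·T ) and Π(γ) = N0·B·σ(γ)·γ. Then there exists γ* ∈ Γ such that the power–versus–packets curve s ↦ P traced parametrically by γ ↦ (σ(γ), Π(γ)) is concave for s ≥ σ(γ*) and convex for 0 < s ≤ σ(γ*); precisely: (i) for all γa, γm, γb ∈ Γ with γa < γm < γb ≤ γ*, Π(γm) ≥ Π(γb) + ((σ(γm) − σ(γb))/(σ(γa) − σ(γb)))·(Π(γa) − Π(γb)); and (ii)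 for all γa, γm, γb ∈ Γ with γ* ≤ γb < γm < γa, Π(γm) ≤ Π(γb) + ((σ(γm) − σ(γb))/(σ(γa) − σ(γb)))·(Π(γa) − Π(γb)). (Here σ is strictly antitone on Γ, so larger γ corresponds to smaller s, and σ(γ*) = s* is the unique inflection point of P(s).) -/
open Set Filter

lemma key_psi (x u : ℝ) (hx : 1 < x)
    (hphi : (3*x^2+1)*u^2 - (x^4+2*x^2-3)*u + (x^2-1)^2 ≤ 0) :
    6*x^2*u^2 - 2*(x^2-1)*(2*x^2+1)*u + 3*(x^2-1)^2 < 0 := by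
  have hx1 : 0 < x^2 - 1 := by nlinarith
  have h1 : 0 ≤ (x^2-1)^3*(x^2-5) := by
    nlinarith [sq_nonneg (2*(3*x^2+1)*u - (x^2-1)*(x^2+3))]
  have h5 : 5 ≤ x^2 := by
    by_contra h
    push_neg at h
    nlinarith [mul_pos (pow_pos hx1 3) (show (0:ℝ) < 5 - x^2 by linarith)]
  have hE : 0 ≤ 3*x^4 - 4*x^2 - 23 := by nlinarith
  have hF : 0 < 18*x^8 - 117*x^6 + 187*x^4 + 61*x^2 - 5 := by nlinarith [sq_nonneg (x^2-5), pow_pos (show (0:ℝ) < x^2 by nlinarith) 2]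
  have hw : 0 < 2*(3*x^2-1)*u - 3*(x^2+1) := by
    by_contra h
    push_neg at h
    nlinarith [sq_nonneg (2*(3*x^2-1)*u - 3*(x^2+1)),
      mul_nonneg (mul_nonneg (by positivity : (0:ℝ) ≤ 2*x^2) hE) (neg_nonneg.mpr h),
      mul_nonneg (sq_nonneg (3*x^2-1)) (neg_nonneg.mpr hphi)]
  nlinarith [mul_pos (pow_pos hx1 2) hw, mul_nonneg (by positivity : (0:ℝ) ≤ 6*x^2) (neg_nonneg.mpr hphi)]

open Set Filter

lemma deriv_neg_right {f : ℝ → ℝ} {d c b : ℝ} (h : HasDerivAt f d c) (hd : d < 0)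
    (hcb : c < b) : ∃ z, c < z ∧ z < b ∧ f z < f c := by
  have htend := hasDerivAt_iff_tendsto_slope.mp h
  have hev : ∀ᶠ z in nhdsWithin c {c}ᶜ, slope f c z < 0 := htend.eventually_lt_const hd
  have hev2 : ∀ᶠ z in nhdsWithin c (Ioi c), slope f c z < 0 :=
    nhdsWithin_mono c (fun z hz => ne_of_gt hz) hev
  have hmem : Ioo c b ∈ nhdsWithin c (Ioi c) := Ioo_mem_nhdsGT_of_mem ⟨le_refl c, hcb⟩
  obtain ⟨z, hz1, hz2⟩ := (hev2.and (eventually_of_mem hmem (fun z hz => hz))).exists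
  refine ⟨z, hz2.1, hz2.2, ?_⟩
  by_contra hle
  push_neg at hle
  have : 0 ≤ slope f c z := by
    rw [slope_def_field]
    exact div_nonneg (by linarith) (by linarith [hz2.1])
  linarith

lemma deriv_neg_left {f : ℝ → ℝ} {d c a : ℝ} (h : HasDerivAt f d c) (hd : d < 0)
    (hac : a < c) : ∃ z, a < z ∧ z < c ∧ f c < f z := by
  have htend := hasDerivAt_iff_tendsto_slope.mp h
  have hev : ∀ᶠ z in nhdsWithin c {c}ᶜ, slope f c z < 0 := htend.eventually_lt_const hd
  have hev2 : ∀ᶠ z in nhdsWithin c (Iio c), slope f c z < 0 :=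
    nhdsWithin_mono c (fun z hz => ne_of_lt hz) hev
  have hmem : Ioo a c ∈ nhdsWithin c (Iio c) := Ioo_mem_nhdsLT_of_mem ⟨hac, le_refl c⟩
  obtain ⟨z, hz1, hz2⟩ := (hev2.and (eventually_of_mem hmem (fun z hz => hz))).exists
  refine ⟨z, hz2.1, hz2.2, ?_⟩
  by_contra hle
  push_neg at hle
  have : 0 ≤ slope f c z := by
    rw [slope_def_field]
    have h1 : f z - f c ≤ 0 := by linarith
    have h2 : z - c ≤ 0 := by linarith [hz2.2]
    exact div_nonneg_of_nonpos h1 h2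
  linarith

lemma barrier {f f' : ℝ → ℝ} {a : ℝ}
    (hd : ∀ x ∈ Ici a, HasDerivAt f (f' x) x)
    (hneg : ∀ x ∈ Ici a, f x ≤ 0 → f' x < 0)
    (ha : f a ≤ 0) : ∀ b, a < b → f b < 0 := by
  intro b hab
  by_contra hfb
  push_neg at hfb
  obtain ⟨t0, ht0a, ht0b, ht0pos⟩ : ∃ t0, a < t0 ∧ t0 ≤ b ∧ 0 < f t0 := by
    rcases lt_or_eq_of_le hfb with h | h
    · exact ⟨b, hab, le_refl b, h⟩
    · obtain ⟨z, hz1, hz2, hz3⟩ :=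
        deriv_neg_left (hd b (le_of_lt hab)) (hneg b (le_of_lt hab) h.ge) hab
      exact ⟨z, hz1, hz2.le, by linarith [hz3]⟩
  set C := Icc a t0 ∩ f ⁻¹' (Iic 0) with hC
  have hcont : ContinuousOn f (Icc a t0) := fun t ht =>
    ((hd t ht.1).continuousAt.continuousWithinAt)
  have hclosed : IsClosed C := hcont.preimage_isClosed_of_isClosed isClosed_Icc isClosed_Iic
  have haC : a ∈ C := ⟨⟨le_refl a, ht0a.le⟩, ha⟩
  have hbdd : BddAbove C := ⟨t0, fun t ht => ht.1.2⟩
  set c := sSup C with hc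
  have hcC : c ∈ C := hclosed.csSup_mem ⟨a, haC⟩ hbdd
  have hct0 : c < t0 := lt_of_le_of_ne hcC.1.2 (fun h => by
    have := hcC.2; rw [h] at this; exact absurd ht0pos (by simpa using this))
  have hca : a ≤ c := hcC.1.1
  obtain ⟨z, hz1, hz2, hz3⟩ :=
    deriv_neg_right (hd c hca) (hneg c hca hcC.2) hct0
  have hfc : f c ≤ 0 := hcC.2
  have hzC : z ∈ C := ⟨⟨le_trans hca hz1.le, hz2.le⟩, by
    simp only [mem_preimage, mem_Iic]; linarith⟩
  exact absurd (le_csSup hbdd hzC) (not_le.mpr hz1)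

open Set Filter

noncomputable def phif (k : ℝ) : ℝ → ℝ := fun x =>
  (3*x^2+1)*(Real.log x - k)^2 - (x^4+2*x^2-3)*(Real.log x - k) + (x^2-1)^2

noncomputable def psif (k : ℝ) : ℝ → ℝ := fun x =>
  6*x^2*(Real.log x - k)^2 - 2*(x^2-1)*(2*x^2+1)*(Real.log x - k) + 3*(x^2-1)^2

lemma phif_hasDerivAt (k x : ℝ) (hx : 0 < x) :
    HasDerivAt (phif k) (psif k x / x) x := by
  have hx2 : HasDerivAt (fun x : ℝ => x^2) (2*x) x := by simpa using hasDerivAt_pow 2 x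
  have hx4 : HasDerivAt (fun x : ℝ => x^4) (4*x^3) x := by
    have := hasDerivAt_pow 4 x; norm_num at this; simpa using this
  have hu : HasDerivAt (fun x : ℝ => Real.log x - k) x⁻¹ x :=
    (Real.hasDerivAt_log hx.ne').sub_const k
  have hu2 : HasDerivAt (fun x : ℝ => (Real.log x - k)^2)
      (2 * (Real.log x - k)^1 * x⁻¹) x := hu.pow 2
  have hA : HasDerivAt (fun x : ℝ => 3*x^2+1) (3*(2*x)) x := (hx2.const_mul 3).add_const 1
  have hB : HasDerivAt (fun x : ℝ => x^4+2*x^2-3) (4*x^3 + 2*(2*x)) x :=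
    (hx4.add (hx2.const_mul 2)).sub_const 3
  have hC : HasDerivAt (fun x : ℝ => (x^2-1)^2) (2*(x^2-1)^1*(2*x)) x :=
    (hx2.sub_const 1).pow 2
  have htot := ((hA.mul hu2).sub (hB.mul hu)).add hC
  refine htot.congr_deriv (Eq.symm ?_)
  unfold psif
  field_simp
  ring

lemma crossing (k : ℝ) (hk0 : 0 < k) :
    ∃ xs : ℝ, Real.exp k < xs ∧
      (∀ y, Real.exp k < y → y < xs → 0 < phif k y) ∧
      (∀ y, xs ≤ y → phif k y ≤ 0) := by
  set x0 := Real.exp k with hx0def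
  have hx01 : 1 < x0 := by
    rw [hx0def, show (1:ℝ) = Real.exp 0 by simp]
    exact Real.exp_lt_exp.mpr hk0
  have hx0pos : 0 < x0 := by linarith
  -- the set where phi ≤ 0
  set S : Set ℝ := {x | x0 < x ∧ phif k x ≤ 0} with hS
  -- x1 = exp (k+2) is in S
  have hSne : S.Nonempty := by
    refine ⟨Real.exp (k+2), Real.exp_lt_exp.mpr (by linarith), ?_⟩
    have hlog : Real.log (Real.exp (k+2)) = k + 2 := Real.log_exp _
    set y := Real.exp (k+2) with hy
    have hy2 : Real.exp 2 ≤ y := Real.exp_le_exp.mpr (by linarith)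
    have he2 : (7:ℝ) < Real.exp 2 := by
      have h1 : (2.7182818283 : ℝ) < Real.exp 1 := Real.exp_one_gt_d9
      have : Real.exp 2 = Real.exp 1 * Real.exp 1 := by
        rw [← Real.exp_add]; norm_num
      nlinarith
    have h7 : (7:ℝ) < y := by linarith
    show phif k y ≤ 0
    unfold phif
    rw [hlog]
    ring_nf
    have hy2' : (49:ℝ) < y^2 := by nlinarith
    nlinarith [mul_lt_mul_of_pos_left hy2' (show (0:ℝ) < y^2 by positivity)]
  have hbdd : BddBelow S := ⟨x0, fun y hy => hy.1.le⟩
  set xs := sInf S with hxs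
  -- continuity of phif at points > 0
  have hcont : ∀ y : ℝ, 0 < y → ContinuousAt (phif k) y := fun y hy =>
    (phif_hasDerivAt k y hy).continuousAt
  -- phif x0 > 0
  have hphix0 : 0 < phif k x0 := by
    unfold phif
    rw [hx0def, Real.log_exp]
    simp only [sub_self]
    have h1 : (1:ℝ) < Real.exp k := hx01
    have h2 : (0:ℝ) < Real.exp k ^ 2 - 1 := by nlinarith
    norm_num
    calc (0:ℝ) < (Real.exp k ^ 2 - 1)^2 := pow_pos h2 2
    _ ≤ _ := by nlinarith [pow_pos h2 2]
  -- lower bound: exists eps > 0 with x0 + eps ≤ xs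
  obtain ⟨ε, hε, hball⟩ := Metric.eventually_nhds_iff.mp
    ((hcont x0 hx0pos).eventually (eventually_gt_nhds hphix0))
  have hxslb : x0 + ε/2 ≤ xs := by
    apply le_csInf hSne
    intro y hy
    by_contra hlt
    push_neg at hlt
    have : dist y x0 < ε := by
      rw [Real.dist_eq, abs_lt]; constructor <;> [linarith [hy.1]; linarith [hy.1]]
    exact absurd (hball this) (not_lt.mpr hy.2)
  have hxsgt : x0 < xs := by linarith
  have hxspos : 0 < xs := by linarith
  refine ⟨xs, hxsgt, ?_, ?_⟩
  · intro y hy1 hy2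
    by_contra h
    push_neg at h
    exact absurd (csInf_le hbdd ⟨hy1, h⟩) (not_le.mpr hy2)
  · -- phif xs ≤ 0
    have hphixs : phif k xs ≤ 0 := by
      by_contra h
      push_neg at h
      obtain ⟨ε', hε', hball'⟩ := Metric.eventually_nhds_iff.mp
        ((hcont xs hxspos).eventually (eventually_gt_nhds h))
      obtain ⟨y, hyS, hylt⟩ := (csInf_lt_iff hbdd hSne).mp
        (show sInf S < xs + ε' by rw [← hxs]; linarith)
      have hygc : xs ≤ y := csInf_le hbdd hyS
      have : dist y xs < ε' := by
        rw [Real.dist_eq, abs_lt]; constructor <;> linarith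
      exact absurd (hball' this) (not_lt.mpr hyS.2)
    intro y hy
    rcases eq_or_lt_of_le hy with h | h
    · rw [← h]; exact hphixs
    · refine le_of_lt (barrier (f' := fun x => psif k x / x) ?_ ?_ hphixs y h)
      · intro z hz
        exact phif_hasDerivAt k z (by simp only [mem_Ici] at hz; linarith)
      · intro z hz hzneg
        simp only [mem_Ici] at hz
        have hz1 : 1 < z := by linarith
        have := key_psi z (Real.log z - k) hz1 (by unfold phif at hzneg; linarith [hzneg])
        have hψ : psif k z < 0 := by unfold psif; linarith [this]
        exact div_neg_of_neg_of_pos hψ (by linarith)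

open Set Filter

noncomputable def sigd (c k B T : ℝ) : ℝ → ℝ := fun γ =>
  2*c^2*((Real.log (1+γ)-k) - (1+γ)^2 + 1) / ((Real.log (1+γ)-k)^3*(1+γ)^3*B*T)

noncomputable def Mfun (N0 B k : ℝ) : ℝ → ℝ := fun γ =>
  N0*B*γ*(((1+γ)^2+(1+γ)+2)*(Real.log (1+γ)-k) - 2*((1+γ)^2-1)) /
    (2*((Real.log (1+γ)-k) - (1+γ)^2 + 1))

noncomputable def Mdfun (N0 B k : ℝ) : ℝ → ℝ := fun γ =>
  N0*B*phif k (1+γ) / (2*((1+γ)^2-1-(Real.log (1+γ)-k))^2)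

lemma hasDerivAt_sigma (c k B T : ℝ) (hB : 0 < B) (hT : 0 < T) (γ : ℝ)
    (hx : 1 < 1+γ) (hu : 0 < Real.log (1+γ) - k) :
    HasDerivAt (fun γ => c ^ 2 * γ * (γ + 2) /
        ((Real.log (1 + γ) - k) ^ 2 * (1 + γ) ^ 2 * B * T)) (sigd c k B T γ) γ := by
  have hxpos : (0:ℝ) < 1 + γ := by linarith
  have h1 : HasDerivAt (fun γ : ℝ => 1 + γ) 1 γ := (hasDerivAt_id γ).const_add 1
  have hlog : HasDerivAt (fun γ : ℝ => Real.log (1 + γ)) ((1+γ)⁻¹ * 1) γ :=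
    (Real.hasDerivAt_log hxpos.ne').comp γ h1
  have hu' : HasDerivAt (fun γ : ℝ => Real.log (1 + γ) - k) ((1+γ)⁻¹ * 1) γ :=
    hlog.sub_const k
  have hnum : HasDerivAt (fun γ : ℝ => c ^ 2 * γ * (γ + 2))
      (c^2 * 1 * (γ + 2) + c^2 * γ * 1) γ :=
    (((hasDerivAt_id γ).const_mul (c^2)).mul ((hasDerivAt_id γ).add_const 2))
  have hden : HasDerivAt (fun γ : ℝ => (Real.log (1 + γ) - k) ^ 2 * (1 + γ) ^ 2 * B * T)
      (((2 * (Real.log (1+γ)-k)^1 * ((1+γ)⁻¹ * 1)) * (1+γ)^2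
        + (Real.log (1+γ)-k)^2 * (2 * (1+γ)^1 * 1)) * B * T) γ :=
    (((hu'.pow 2).mul (h1.pow 2)).mul_const B).mul_const T
  have hden0 : (Real.log (1 + γ) - k) ^ 2 * (1 + γ) ^ 2 * B * T ≠ 0 := by positivity
  have := hnum.div hden hden0
  refine this.congr_deriv (Eq.symm ?_)
  unfold sigd
  rw [div_eq_div_iff]
  · field_simp
    ring
  · positivity
  · positivity

lemma hasDerivAt_M (N0 B k : ℝ) (γ : ℝ) (hx : 1 < 1+γ) (hu : 0 < Real.log (1+γ)-k)
    (hA : Real.log (1+γ)-k < (1+γ)^2-1) :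
    HasDerivAt (Mfun N0 B k) (Mdfun N0 B k γ) γ := by
  have hxpos : (0:ℝ) < 1 + γ := by linarith
  have h1 : HasDerivAt (fun γ : ℝ => 1 + γ) 1 γ := (hasDerivAt_id γ).const_add 1
  have hx2 : HasDerivAt (fun γ : ℝ => (1+γ)^2) (2*(1+γ)^1*1) γ := h1.pow 2
  have hlog : HasDerivAt (fun γ : ℝ => Real.log (1 + γ)) ((1+γ)⁻¹ * 1) γ :=
    (Real.hasDerivAt_log hxpos.ne').comp γ h1
  have hu' : HasDerivAt (fun γ : ℝ => Real.log (1 + γ) - k) ((1+γ)⁻¹ * 1) γ :=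
    hlog.sub_const k
  have hQ : HasDerivAt (fun γ : ℝ => ((1+γ)^2+(1+γ)+2)*(Real.log (1+γ)-k) - 2*((1+γ)^2-1))
      ((2*(1+γ)^1*1 + 1)*(Real.log (1+γ)-k) + ((1+γ)^2+(1+γ)+2)*((1+γ)⁻¹ * 1)
        - 2*(2*(1+γ)^1*1)) γ := by
    have hyA : HasDerivAt (fun γ : ℝ => (1+γ)^2+(1+γ)+2) (2*(1+γ)^1*1 + 1) γ :=
      (hx2.add h1).add_const 2
    exact (hyA.mul hu').sub ((hx2.sub_const 1).const_mul 2)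
  have hn := ((hasDerivAt_id γ).const_mul (N0*B)).mul hQ
  have hR : HasDerivAt (fun γ : ℝ => (Real.log (1+γ)-k) - (1+γ)^2 + 1)
      ((1+γ)⁻¹ * 1 - 2*(1+γ)^1*1) γ := (hu'.sub hx2).add_const 1
  have hR0 : 2*((Real.log (1+γ)-k) - (1+γ)^2 + 1) ≠ 0 := by
    have : (Real.log (1+γ)-k) - (1+γ)^2 + 1 < 0 := by nlinarith
    linarith [this]
  have hM := hn.div (hR.const_mul 2) hR0
  have heq : (fun γ : ℝ => N0*B*γ*(((1+γ)^2+(1+γ)+2)*(Real.log (1+γ)-k) - 2*((1+γ)^2-1)) /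
      (2*((Real.log (1+γ)-k) - (1+γ)^2 + 1))) = Mfun N0 B k := rfl
  rw [← heq] at *
  refine hM.congr_deriv (Eq.symm ?_)
  simp only [Pi.mul_apply, id]
  unfold Mdfun phif
  rw [div_eq_div_iff]
  · field_simp
    ring
  · have h2 : (0:ℝ) < (1+γ)^2-1-(Real.log (1+γ)-k) := by linarith
    positivity
  · have : (Real.log (1+γ)-k) - (1+γ)^2 + 1 < 0 := by nlinarith
    positivity

open Set Filter

lemma Pd_eq (N0 c k B T : ℝ) (hB : 0 < B) (hT : 0 < T) (γ : ℝ)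
    (hx : 1 < 1+γ) (hu : 0 < Real.log (1+γ)-k) (hA : Real.log (1+γ)-k < (1+γ)^2-1) :
    N0*B*(sigd c k B T γ * γ + c ^ 2 * γ * (γ + 2) /
        ((Real.log (1 + γ) - k) ^ 2 * (1 + γ) ^ 2 * B * T))
      = Mfun N0 B k γ * sigd c k B T γ := by
  have hxpos : (0:ℝ) < 1 + γ := by linarith
  have hR : (Real.log (1+γ)-k) - (1+γ)^2 + 1 ≠ 0 := by nlinarith
  unfold sigd Mfun
  field_simp
  ring

/-- The power–versus–packets curve traced parametrically by
`γ ↦ (σ(γ), Pw(γ))` on `Γ = (2^{L/(B·T)} − 1, ∞)` has an inflection point `γ*`: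
it is concave for `s ≥ σ(γ*)` (chord inequality (i), recalling that `σ` is antitone
so `γa < γm < γb ≤ γ*` corresponds to `σ(γa) > σ(γm) > σ(γb) ≥ σ(γ*)`) and convex
for `0 < s ≤ σ(γ*)` (chord inequality (ii)). (`Pw` plays the role of `Π`.) -/
theorem power_packet_curve_inflection
    (T B L N0 c k : ℝ)
    (hT : 0 < T) (hB : 0 < B) (hL : 0 < L) (hN0 : 0 < N0) (hc : 0 < c)
    (hk : k = (L / (B * T)) * Real.log 2)
    (σ Pw : ℝ → ℝ)
    (hσ : ∀ γ, σ γ = c ^ 2 * γ * (γ + 2) /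
        ((Real.log (1 + γ) - k) ^ 2 * (1 + γ) ^ 2 * B * T))
    (hPw : ∀ γ, Pw γ = N0 * B * σ γ * γ) :
    ∃ γs : ℝ, (2 : ℝ) ^ (L / (B * T)) - 1 < γs ∧
      (∀ γa γm γb : ℝ,
        (2 : ℝ) ^ (L / (B * T)) - 1 < γa →
        (2 : ℝ) ^ (L / (B * T)) - 1 < γm →
        (2 : ℝ) ^ (L / (B * T)) - 1 < γb →
        γa < γm → γm < γb → γb ≤ γs →
        Pw γm ≥ Pw γb + ((σ γm - σ γb) / (σ γa - σ γb)) * (Pw γa - Pw γb)) ∧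
      (∀ γa γm γb : ℝ,
        (2 : ℝ) ^ (L / (B * T)) - 1 < γa →
        (2 : ℝ) ^ (L / (B * T)) - 1 < γm →
        (2 : ℝ) ^ (L / (B * T)) - 1 < γb →
        γs ≤ γb → γb < γm → γm < γa →
        Pw γm ≤ Pw γb + ((σ γm - σ γb) / (σ γa - σ γb)) * (Pw γa - Pw γb)) := by
  have hk0 : 0 < k := by
    rw [hk]
    exact mul_pos (div_pos hL (mul_pos hB hT)) (Real.log_pos one_lt_two)
  have hpow : (2:ℝ) ^ (L / (B * T)) = Real.exp k := by
    rw [Real.rpow_def_of_pos (by norm_num : (0:ℝ) < 2), hk, mul_comm]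
  obtain ⟨xs, hxs1, hxs_pos, hxs_neg⟩ := crossing k hk0
  set γ0 : ℝ := Real.exp k - 1 with hγ0
  have hek : 1 < Real.exp k := by
    rw [show (1:ℝ) = Real.exp 0 by simp]
    exact Real.exp_lt_exp.mpr hk0
  have hfacts : ∀ γ : ℝ, γ0 < γ →
      1 < 1+γ ∧ 0 < Real.log (1+γ) - k ∧ Real.log (1+γ)-k < (1+γ)^2-1 := by
    intro γ hγ
    have hx : Real.exp k < 1 + γ := by simp only [hγ0] at hγ; linarith
    have h1 : 1 < 1+γ := by linarith
    have hu : 0 < Real.log (1+γ) - k := by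
      have := Real.log_lt_log (Real.exp_pos k) hx
      rw [Real.log_exp] at this; linarith
    have hlb := Real.log_le_sub_one_of_pos (show (0:ℝ) < 1+γ by linarith)
    exact ⟨h1, hu, by nlinarith⟩
  have hσfun : σ = fun γ => c ^ 2 * γ * (γ + 2) /
      ((Real.log (1 + γ) - k) ^ 2 * (1 + γ) ^ 2 * B * T) := funext hσ
  have hσd : ∀ γ, γ0 < γ → HasDerivAt σ (sigd c k B T γ) γ := by
    intro γ hγ
    obtain ⟨h1, h2, h3⟩ := hfacts γ hγ
    rw [hσfun]
    exact hasDerivAt_sigma c k B T hB hT γ h1 h2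
  have hσd_neg : ∀ γ, γ0 < γ → sigd c k B T γ < 0 := by
    intro γ hγ
    obtain ⟨h1, h2, h3⟩ := hfacts γ hγ
    unfold sigd
    apply div_neg_of_neg_of_pos
    · nlinarith [mul_pos (pow_pos hc 2)
        (show (0:ℝ) < (1+γ)^2 - 1 - (Real.log (1+γ)-k) by linarith)]
    · positivity
  have hPd : ∀ γ, γ0 < γ →
      HasDerivAt Pw (Mfun N0 B k γ * sigd c k B T γ) γ := by
    intro γ hγ
    obtain ⟨h1, h2, h3⟩ := hfacts γ hγ
    have hPwfun : Pw = fun γ => N0 * B * σ γ * γ := funext hPw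
    have hd := ((hσd γ hγ).const_mul (N0*B)).mul (hasDerivAt_id γ)
    rw [hPwfun]
    have hval : Mfun N0 B k γ * sigd c k B T γ
        = N0*B * sigd c k B T γ * γ + N0*B*σ γ * (1:ℝ) := by
      rw [hσ γ]
      linear_combination - Pd_eq N0 c k B T hB hT γ h1 h2 h3
    rw [hval]
    exact hd
  have hMd : ∀ γ, γ0 < γ → HasDerivAt (Mfun N0 B k) (Mdfun N0 B k γ) γ := by
    intro γ hγ
    obtain ⟨h1, h2, h3⟩ := hfacts γ hγ
    exact hasDerivAt_M N0 B k γ h1 h2 h3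
  have hanti : StrictAntiOn σ (Ioi γ0) := by
    apply strictAntiOn_of_deriv_neg (convex_Ioi γ0)
    · intro z hz
      exact (hσd z hz).continuousAt.continuousWithinAt
    · intro z hz
      rw [interior_Ioi] at hz
      rw [(hσd z hz).deriv]
      exact hσd_neg z hz
  have hmvt : ∀ p q, γ0 < p → p < q →
      ∃ ξ, p < ξ ∧ ξ < q ∧ Pw q - Pw p = (σ q - σ p) * Mfun N0 B k ξ := by
    intro p q hp hpq
    have hmem : ∀ z ∈ Icc p q, γ0 < z := fun z hz => lt_of_lt_of_le hp hz.1
    have hmem' : ∀ z ∈ Ioo p q, γ0 < z := fun z hz => lt_trans hp hz.1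
    obtain ⟨ξ, hξ, heq⟩ := exists_ratio_hasDerivAt_eq_ratio_slope Pw
      (fun γ => Mfun N0 B k γ * sigd c k B T γ) hpq
      (fun z hz => (hPd z (hmem z hz)).continuousAt.continuousWithinAt)
      (fun z hz => hPd z (hmem' z hz))
      σ (sigd c k B T)
      (fun z hz => (hσd z (hmem z hz)).continuousAt.continuousWithinAt)
      (fun z hz => hσd z (hmem' z hz))
    have hs0 : sigd c k B T ξ ≠ 0 := ne_of_lt (hσd_neg ξ (hmem' ξ hξ))
    refine ⟨ξ, hξ.1, hξ.2, mul_right_cancel₀ hs0 ?_⟩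
    linear_combination -heq
  have hγs_gt : γ0 < xs - 1 := by linarith
  have hmono : MonotoneOn (Mfun N0 B k) (Ioc γ0 (xs-1)) := by
    apply monotoneOn_of_deriv_nonneg (convex_Ioc _ _)
    · intro z hz
      exact (hMd z hz.1).continuousAt.continuousWithinAt
    · rw [interior_Ioc]
      intro z hz
      exact (hMd z hz.1).differentiableAt.differentiableWithinAt
    · rw [interior_Ioc]
      intro z hz
      rw [(hMd z hz.1).deriv]
      obtain ⟨h1, h2, h3⟩ := hfacts z hz.1
      have hφ : 0 < phif k (1+z) := by
        apply hxs_pos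
        · simp only [hγ0] at hz; linarith [hz.1]
        · linarith [hz.2]
      unfold Mdfun
      apply div_nonneg
      · positivity
      · positivity
  have hantiM : AntitoneOn (Mfun N0 B k) (Ici (xs-1)) := by
    apply antitoneOn_of_deriv_nonpos (convex_Ici _)
    · intro z hz
      exact (hMd z (lt_of_lt_of_le hγs_gt hz)).continuousAt.continuousWithinAt
    · rw [interior_Ici]
      intro z hz
      exact (hMd z (lt_trans hγs_gt hz)).differentiableAt.differentiableWithinAt
    · rw [interior_Ici]
      intro z hz
      rw [(hMd z (lt_trans hγs_gt hz)).deriv]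
      obtain ⟨h1, h2, h3⟩ := hfacts z (lt_trans hγs_gt hz)
      have hφ : phif k (1+z) ≤ 0 := hxs_neg (1+z) (by linarith [mem_Ioi.mp hz])
      unfold Mdfun
      apply div_nonpos_of_nonpos_of_nonneg
      · have : (0:ℝ) ≤ N0*B := by positivity
        nlinarith
      · positivity
  refine ⟨xs - 1, by rw [hpow]; linarith, ?_, ?_⟩
  · -- concave region
    intro γa γm γb hga hgm hgb ham hmb hbs
    rw [hpow] at hga hgm hgb
    have hga' : γ0 < γa := by linarith
    have hgm' : γ0 < γm := by linarith
    have hgb' : γ0 < γb := by linarith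
    obtain ⟨ξ1, hξ1a, hξ1b, e1⟩ := hmvt γa γm hga' ham
    obtain ⟨ξ2, hξ2a, hξ2b, e2⟩ := hmvt γm γb hgm' hmb
    have h12 : Mfun N0 B k ξ1 ≤ Mfun N0 B k ξ2 := by
      apply hmono
      · exact ⟨lt_trans hga' hξ1a, by linarith⟩
      · exact ⟨lt_trans hgm' hξ2a, by linarith⟩
      · linarith
    have hsmb : σ γb < σ γm := hanti (mem_Ioi.mpr hgm') (mem_Ioi.mpr hgb') hmb
    have hsam : σ γm < σ γa := hanti (mem_Ioi.mpr hga') (mem_Ioi.mpr hgm') ham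
    have hdpos : 0 < σ γa - σ γb := by linarith
    have expand : (σ γm - σ γb)*(Pw γa - Pw γb) - (Pw γm - Pw γb)*(σ γa - σ γb)
        = -((σ γm - σ γb)*(σ γa - σ γm)*(Mfun N0 B k ξ2 - Mfun N0 B k ξ1)) := by
      linear_combination (-(σ γm - σ γb))*e1 + (σ γa - σ γm)*e2
    have hint : 0 ≤ (σ γm - σ γb)*(σ γa - σ γm)*(Mfun N0 B k ξ2 - Mfun N0 B k ξ1) :=
      mul_nonneg (mul_nonneg (by linarith) (by linarith)) (by linarith)
    have key : ((σ γm - σ γb)/(σ γa - σ γb)) * (Pw γa - Pw γb) ≤ Pw γm - Pw γb := by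
      rw [div_mul_eq_mul_div, div_le_iff₀ hdpos]
      linarith
    linarith
  · -- convex region
    intro γa γm γb hga hgm hgb hbs hbm hma
    rw [hpow] at hga hgm hgb
    have hga' : γ0 < γa := by linarith
    have hgm' : γ0 < γm := by linarith
    have hgb' : γ0 < γb := by linarith
    obtain ⟨ξ2, hξ2a, hξ2b, e2⟩ := hmvt γb γm hgb' hbm
    obtain ⟨ξ1, hξ1a, hξ1b, e1⟩ := hmvt γm γa hgm' hma
    have h12 : Mfun N0 B k ξ1 ≤ Mfun N0 B k ξ2 := by
      apply hantiM
      · exact mem_Ici.mpr (by linarith)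
      · exact mem_Ici.mpr (by linarith)
      · linarith
    have hsmb : σ γm < σ γb := hanti (mem_Ioi.mpr hgb') (mem_Ioi.mpr hgm') hbm
    have hsam : σ γa < σ γm := hanti (mem_Ioi.mpr hgm') (mem_Ioi.mpr hga') hma
    have hdneg : σ γa - σ γb < 0 := by linarith
    have expand : (σ γm - σ γb)*(Pw γa - Pw γb) - (Pw γm - Pw γb)*(σ γa - σ γb)
        = -((σ γm - σ γb)*(σ γa - σ γm)*(Mfun N0 B k ξ2 - Mfun N0 B k ξ1)) := by
      linear_combination (σ γm - σ γb)*e1 + (σ γm - σ γa)*e2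
    have hprod : 0 ≤ (σ γm - σ γb)*(σ γa - σ γm) := by
      nlinarith [mul_nonneg (show (0:ℝ) ≤ σ γb - σ γm by linarith)
        (show (0:ℝ) ≤ σ γm - σ γa by linarith)]
    have hint : 0 ≤ (σ γm - σ γb)*(σ γa - σ γm)*(Mfun N0 B k ξ2 - Mfun N0 B k ξ1) :=
      mul_nonneg hprod (by linarith)
    have key : Pw γm - Pw γb ≤ ((σ γm - σ γb)/(σ γa - σ γb)) * (Pw γa - Pw γb) := by
      rw [div_mul_eq_mul_div, le_div_iff_of_neg hdneg]
      linarith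
    linarith
end

section
/- If (f, π) is a policy together with a stationary distribution π of f, then the family x defined by x_{q,s} = f_{q,s}·π_q for all q ∈ {0,…,Q} and s ∈ {0,…,S} is an LP point, and moreover D(x) = D(f,π) and P̄(x) = P̄(f,π). -/
open Finset

/-- Minimal number of packets that may be served at queue length `q`:
`s_q^min = max{0, q − (Q − A)}` (natural subtraction realizes the `max` with `0`). -/
def sLo (Q A q : ℕ) : ℕ := q - (Q - A)

/-- Maximal number of packets that may be served at queue length `q`: `s_q^max = min{S, q}`. -/
def sHi (S q : ℕ) : ℕ := min S q

/-- Indicator `1{i − s + A = j}` (integer arithmetic), as a real number. -/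
noncomputable def indArr (A i s j : ℕ) : ℝ :=
  if (i : ℤ) - (s : ℤ) + (A : ℤ) = (j : ℤ) then 1 else 0

/-- Indicator `1{i − s = j}` (integer arithmetic), as a real number. -/
noncomputable def indNoArr (i s j : ℕ) : ℝ :=
  if (i : ℤ) - (s : ℤ) = (j : ℤ) then 1 else 0

/-- Transition probability `λ_{i,j}` of the queue under policy `f`. -/
noncomputable def lam (S A : ℕ) (α : ℝ) (f : ℕ → ℕ → ℝ) (i j : ℕ) : ℝ :=
  ∑ s ∈ range (S + 1), f i s * (α * indArr A i s j + (1 - α) * indNoArr i s j)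

/-- A (probabilistic, queue-aware) variable-length coding policy. -/
def IsPolicy (Q S A : ℕ) (f : ℕ → ℕ → ℝ) : Prop :=
  (∀ q ≤ Q, ∀ s ≤ S, 0 ≤ f q s) ∧
  (∀ q ≤ Q, ∑ s ∈ range (S + 1), f q s = 1) ∧
  (∀ q ≤ Q, ∀ s ≤ S, (s < sLo Q A q ∨ sHi S q < s) → f q s = 0)

/-- `pi` is a stationary distribution of the queue-length Markov chain of policy `f`. -/
def IsStationaryDist (Q S A : ℕ) (α : ℝ) (f : ℕ → ℕ → ℝ) (pi : ℕ → ℝ) : Prop :=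
  (∀ q ≤ Q, 0 ≤ pi q) ∧
  (∑ q ∈ range (Q + 1), pi q = 1) ∧
  (∀ j ≤ Q, pi j = ∑ i ∈ range (Q + 1), lam S A α f i j * pi i)

/-- Average delay `D(f,π) = (1/(A·α))·Σ_q q·π_q` of a policy with stationary distribution `pi`. -/
noncomputable def delayFP (Q A : ℕ) (α : ℝ) (pi : ℕ → ℝ) : ℝ :=
  (1 / (A * α)) * ∑ q ∈ range (Q + 1), (q : ℝ) * pi q

/-- Average power `P̄(f,π) = Σ_q Σ_s P(s)·f_{q,s}·π_q`. -/
noncomputable def powerFP (Q S : ℕ) (P : ℕ → ℝ) (f : ℕ → ℕ → ℝ) (pi : ℕ → ℝ) : ℝ :=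
  ∑ q ∈ range (Q + 1), ∑ s ∈ range (S + 1), P s * f q s * pi q

/-- An LP point: a feasible point of the equivalent linear program. -/
def IsLP (Q S A : ℕ) (α : ℝ) (x : ℕ → ℕ → ℝ) : Prop :=
  (∀ q ≤ Q, ∀ s ≤ S, 0 ≤ x q s) ∧
  (∀ q ≤ Q, ∀ s ≤ S, (s < sLo Q A q ∨ sHi S q < s) → x q s = 0) ∧
  (∑ q ∈ range (Q + 1), ∑ s ∈ range (S + 1), x q s = 1) ∧
  (∀ j ≤ Q,
    ∑ i ∈ range (Q + 1), ∑ s ∈ range (S + 1),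
      x i s * (α * indArr A i s j + (1 - α) * indNoArr i s j)
    = ∑ s ∈ range (S + 1), x j s)

/-- Delay `D(x) = (1/(A·α))·Σ_{q,s} q·x_{q,s}` of an LP point. -/
noncomputable def delayLP (Q S A : ℕ) (α : ℝ) (x : ℕ → ℕ → ℝ) : ℝ :=
  (1 / (A * α)) * ∑ q ∈ range (Q + 1), ∑ s ∈ range (S + 1), (q : ℝ) * x q s

/-- Power `P̄(x) = Σ_{q,s} P(s)·x_{q,s}` of an LP point. -/
noncomputable def powerLP (Q S : ℕ) (P : ℕ → ℝ) (x : ℕ → ℕ → ℝ) : ℝ :=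
  ∑ q ∈ range (Q + 1), ∑ s ∈ range (S + 1), P s * x q s

/-- From a policy `f` with stationary distribution `pi`, the family
`x_{q,s} = f_{q,s}·π_q` is an LP point with the same delay and power. -/
theorem policy_to_LP_point
    (Q S A : ℕ) (α : ℝ) (P : ℕ → ℝ)
    (hA : 1 ≤ A) (hAS : A ≤ S) (hSQ : S ≤ Q)
    (hα0 : 0 < α) (hα1 : α < 1)
    (hP : ∀ s ≤ S, 0 ≤ P s)
    (f : ℕ → ℕ → ℝ) (pi : ℕ → ℝ)
    (hf : IsPolicy Q S A f) (hpi : IsStationaryDist Q S A α f pi) :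
    IsLP Q S A α (fun q s => f q s * pi q) ∧
    delayLP Q S A α (fun q s => f q s * pi q) = delayFP Q A α pi ∧
    powerLP Q S P (fun q s => f q s * pi q) = powerFP Q S P f pi := by
  obtain ⟨hf0, hf1, hfz⟩ := hf
  obtain ⟨hpi0, hpi1, hst⟩ := hpi
  refine ⟨⟨?_, ?_, ?_, ?_⟩, ?_, ?_⟩
  · intro q hq s hs
    exact mul_nonneg (hf0 q hq s hs) (hpi0 q hq)
  · intro q hq s hs h
    simp [hfz q hq s hs h]
  · calc ∑ q ∈ range (Q + 1), ∑ s ∈ range (S + 1), f q s * pi q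
        = ∑ q ∈ range (Q + 1), pi q := by
          refine Finset.sum_congr rfl fun q hq => ?_
          rw [← Finset.sum_mul, hf1 q (Nat.lt_succ_iff.mp (Finset.mem_range.mp hq)), one_mul]
    _ = 1 := hpi1
  · intro j hj
    have h1 : ∑ i ∈ range (Q + 1), ∑ s ∈ range (S + 1),
        (f i s * pi i) * (α * indArr A i s j + (1 - α) * indNoArr i s j)
        = ∑ i ∈ range (Q + 1), lam S A α f i j * pi i := by
      refine Finset.sum_congr rfl fun i hi => ?_
      rw [lam, Finset.sum_mul]
      refine Finset.sum_congr rfl fun s hs => ?_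
      ring
    have h2 : ∑ s ∈ range (S + 1), f j s * pi j = pi j := by
      rw [← Finset.sum_mul, hf1 j hj, one_mul]
    simp only [h1, h2, ← hst j hj]
  · rw [delayLP, delayFP]
    congr 1
    refine Finset.sum_congr rfl fun q hq => ?_
    rw [← Finset.mul_sum, ← Finset.sum_mul,
      hf1 q (Nat.lt_succ_iff.mp (Finset.mem_range.mp hq)), one_mul]
  · rw [powerLP, powerFP]
    refine Finset.sum_congr rfl fun q hq => Finset.sum_congr rfl fun s hs => ?_
    ring
end

section
/- Let x be an LP point. Define π_q = Σ_{s=0}^{S} x_{q,s} for each q ∈ {0,…,Q}, and define f by f_{q,s} = x_{q,s}/π_q whenever π_q > 0, and f_{q,s} = 1{s = s_q^max} whenever π_q = 0. Then f is a policy, π is a stationary distribution of f, and D(f,π) = D(x) and P̄(f,π) = P̄(x). -/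
open Finset

/-- From an LP point `x`, setting `π_q = Σ_s x_{q,s}` and
`f_{q,s} = x_{q,s}/π_q` when `π_q > 0`, `f_{q,s} = 1{s = s_q^max}` when `π_q = 0`,
yields a policy `f` with stationary distribution `pi` having the same delay and power. -/
theorem LP_point_to_policy
    (Q S A : ℕ) (α : ℝ) (P : ℕ → ℝ)
    (hA : 1 ≤ A) (hAS : A ≤ S) (hSQ : S ≤ Q)
    (hα0 : 0 < α) (hα1 : α < 1)
    (hP : ∀ s ≤ S, 0 ≤ P s)
    (x : ℕ → ℕ → ℝ) (hx : IsLP Q S A α x)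
    (pi : ℕ → ℝ) (hpi : ∀ q, pi q = ∑ s ∈ range (S + 1), x q s)
    (f : ℕ → ℕ → ℝ)
    (hf : ∀ q s, f q s =
      if 0 < pi q then x q s / pi q else if s = sHi S q then 1 else 0) :
    IsPolicy Q S A f ∧ IsStationaryDist Q S A α f pi ∧
    delayFP Q A α pi = delayLP Q S A α x ∧
    powerFP Q S P f pi = powerLP Q S P x := by
  obtain ⟨hx1, hx2, hx3, hx4⟩ := hx
  -- π is nonnegative
  have hpos : ∀ q ≤ Q, 0 ≤ pi q := by
    intro q hq
    rw [hpi]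
    exact Finset.sum_nonneg fun s hs => hx1 q hq s (Nat.lt_succ_iff.mp (mem_range.mp hs))
  -- if π_q = 0 then all x q s = 0
  have hzero : ∀ q ≤ Q, pi q = 0 → ∀ s ∈ range (S + 1), x q s = 0 := by
    intro q hq h0
    rw [hpi] at h0
    exact (Finset.sum_eq_zero_iff_of_nonneg
      (fun s hs => hx1 q hq s (Nat.lt_succ_iff.mp (mem_range.mp hs)))).mp h0
  -- key multiplicative identity
  have hmul : ∀ q ≤ Q, ∀ s ∈ range (S + 1), f q s * pi q = x q s := by
    intro q hq s hs
    rw [hf]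
    by_cases h : 0 < pi q
    · simp only [h, if_true]
      field_simp
    · have h0 : pi q = 0 := le_antisymm (not_lt.mp h) (hpos q hq)
      simp [h, h0, hzero q hq h0 s hs]
  have hsLoHi : ∀ q ≤ Q, sLo Q A q ≤ sHi S q := by
    intro q hq
    simp only [sLo, sHi]
    omega
  constructor
  · -- IsPolicy
    refine ⟨?_, ?_, ?_⟩
    · intro q hq s hs
      rw [hf]
      by_cases h : 0 < pi q
      · simp only [h, if_true]
        exact div_nonneg (hx1 q hq s hs) (le_of_lt h)
      · simp only [h, if_false]
        split <;> norm_num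
    · intro q hq
      by_cases h : 0 < pi q
      · have : ∑ s ∈ range (S + 1), f q s = (∑ s ∈ range (S + 1), x q s) / pi q := by
          rw [Finset.sum_div]
          exact Finset.sum_congr rfl fun s _ => by rw [hf]; simp [h]
        rw [this, ← hpi, div_self (ne_of_gt h)]
      · have : ∑ s ∈ range (S + 1), f q s
            = ∑ s ∈ range (S + 1), if s = sHi S q then (1 : ℝ) else 0 := by
          exact Finset.sum_congr rfl fun s _ => by rw [hf]; simp [h]
        rw [this, Finset.sum_ite_eq' (range (S + 1)) (sHi S q) (fun _ => (1 : ℝ))]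
        have : sHi S q ∈ range (S + 1) := by
          simp only [sHi, mem_range]; omega
        simp [this]
    · intro q hq s hs hout
      rw [hf]
      by_cases h : 0 < pi q
      · simp only [h, if_true, hx2 q hq s hs hout, zero_div]
      · have hne : s ≠ sHi S q := by
          rcases hout with h1 | h2
          · exact fun he => absurd (hsLoHi q hq) (by omega)
          · omega
        simp [h, hne]
  constructor
  · -- IsStationary
    refine ⟨hpos, ?_, ?_⟩
    · simp only [hpi]; exact hx3
    · intro j hj
      have : ∀ i ∈ range (Q + 1), lam S A α f i j * pi i
          = ∑ s ∈ range (S + 1), x i s * (α * indArr A i s j + (1 - α) * indNoArr i s j) := by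
        intro i hi
        rw [lam, Finset.sum_mul]
        refine Finset.sum_congr rfl fun s hs => ?_
        rw [mul_right_comm, hmul i (Nat.lt_succ_iff.mp (mem_range.mp hi)) s hs]
      rw [Finset.sum_congr rfl this, hx4 j hj, ← hpi]
  constructor
  · -- delay
    rw [delayFP, delayLP]
    congr 1
    refine Finset.sum_congr rfl fun q _ => ?_
    rw [hpi, Finset.mul_sum]
  · -- power
    rw [powerFP, powerLP]
    refine Finset.sum_congr rfl fun q hq => Finset.sum_congr rfl fun s hs => ?_
    rw [mul_assoc, hmul q (Nat.lt_succ_iff.mp (mem_range.mp hq)) s hs]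
end

section
/- The set of achievable average power–delay pairs under policies equals the set of power–delay pairs of LP points: { (P̄(f,π), D(f,π)) : f a policy and π a stationary distribution of f } = { (P̄(x), D(x)) : x an LP point }, as subsets of ℝ². In particular, for every real Pth, the infimum of D(f,π) over all policies f with stationary distribution π satisfying P̄(f,π) ≤ Pth equals the infimum of D(x) over all LP points x satisfying P̄(x) ≤ Pth. -/
open Finset

lemma sLo_le_S {Q S A q : ℕ} (hAS : A ≤ S) (hq : q ≤ Q) : sLo Q A q ≤ S := by
  unfold sLo; omega

lemma sLo_le_sHi {Q S A q : ℕ} (hAS : A ≤ S) (hSQ : S ≤ Q) (hq : q ≤ Q) :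
    sLo Q A q ≤ sHi S q := by
  unfold sLo sHi; omega

lemma policy_to_LP (Q S A : ℕ) (α : ℝ) (P : ℕ → ℝ) (f : ℕ → ℕ → ℝ) (pi : ℕ → ℝ)
    (hf : IsPolicy Q S A f) (hpi : IsStationaryDist Q S A α f pi) :
    IsLP Q S A α (fun q s => f q s * pi q) ∧
    powerLP Q S P (fun q s => f q s * pi q) = powerFP Q S P f pi ∧
    delayLP Q S A α (fun q s => f q s * pi q) = delayFP Q A α pi := by
  obtain ⟨hf0, hf1, hfz⟩ := hf
  obtain ⟨hp0, hp1, hpb⟩ := hpi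
  have key : ∀ q ∈ range (Q + 1), ∑ s ∈ range (S + 1), f q s * pi q = pi q := by
    intro q hq
    rw [← Finset.sum_mul, hf1 q (Nat.lt_succ_iff.mp (Finset.mem_range.mp hq)), one_mul]
  refine ⟨⟨?_, ?_, ?_, ?_⟩, ?_, ?_⟩
  · intro q hq s hs
    exact mul_nonneg (hf0 q hq s hs) (hp0 q hq)
  · intro q hq s hs h
    simp [hfz q hq s hs h]
  · rw [Finset.sum_congr rfl key, hp1]
  · intro j hj
    have L : ∀ i ∈ range (Q + 1),
        ∑ s ∈ range (S + 1),
          (f i s * pi i) * (α * indArr A i s j + (1 - α) * indNoArr i s j)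
        = lam S A α f i j * pi i := by
      intro i hi
      rw [lam, Finset.sum_mul]
      exact Finset.sum_congr rfl fun s hs => by ring
    calc ∑ i ∈ range (Q + 1), ∑ s ∈ range (S + 1),
          (f i s * pi i) * (α * indArr A i s j + (1 - α) * indNoArr i s j)
        = ∑ i ∈ range (Q + 1), lam S A α f i j * pi i := Finset.sum_congr rfl L
      _ = pi j := (hpb j hj).symm
      _ = ∑ s ∈ range (S + 1), f j s * pi j := (key j (Finset.mem_range.mpr (Nat.lt_succ_of_le hj))).symm
  · unfold powerLP powerFP
    exact Finset.sum_congr rfl fun q _ => Finset.sum_congr rfl fun s _ => by ring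
  · unfold delayLP delayFP
    congr 1
    refine Finset.sum_congr rfl fun q hq => ?_
    show (∑ s ∈ range (S + 1), (q:ℝ) * (f q s * pi q)) = (q:ℝ) * pi q
    calc ∑ s ∈ range (S + 1), (q:ℝ) * (f q s * pi q)
        = (q:ℝ) * ∑ s ∈ range (S + 1), f q s * pi q := by rw [Finset.mul_sum]
      _ = (q:ℝ) * pi q := by rw [key q hq]

lemma LP_to_policy (Q S A : ℕ) (α : ℝ) (P : ℕ → ℝ) (hAS : A ≤ S) (hSQ : S ≤ Q)
    (x : ℕ → ℕ → ℝ) (hx : IsLP Q S A α x) :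
    ∃ f pi, IsPolicy Q S A f ∧ IsStationaryDist Q S A α f pi ∧
      powerFP Q S P f pi = powerLP Q S P x ∧ delayFP Q A α pi = delayLP Q S A α x := by
  obtain ⟨hx0, hxz, hx1, hxb⟩ := hx
  set pi : ℕ → ℝ := fun q => ∑ s ∈ range (S + 1), x q s with hpidef
  set f : ℕ → ℕ → ℝ := fun q s =>
    if pi q = 0 then (if s = sLo Q A q then 1 else 0) else x q s / pi q with hfdef
  have hpinn : ∀ q ≤ Q, 0 ≤ pi q := fun q hq =>
    Finset.sum_nonneg fun s hs => hx0 q hq s (Nat.lt_succ_iff.mp (Finset.mem_range.mp hs))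
  have hxzero : ∀ q ≤ Q, pi q = 0 → ∀ s ∈ range (S + 1), x q s = 0 := by
    intro q hq h0 s hs
    exact (Finset.sum_eq_zero_iff_of_nonneg fun s hs =>
      hx0 q hq s (Nat.lt_succ_iff.mp (Finset.mem_range.mp hs))).mp h0 s hs
  have hfx : ∀ q ≤ Q, ∀ s ∈ range (S + 1), f q s * pi q = x q s := by
    intro q hq s hs
    by_cases h : pi q = 0
    · rw [h, mul_zero]
      exact (hxzero q hq h s hs).symm
    · have hfq : f q s = x q s / pi q := by
        simp only [hfdef]; rw [if_neg h]
      rw [hfq]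
      exact div_mul_cancel₀ _ h
  have hfpol : IsPolicy Q S A f := by
    refine ⟨?_, ?_, ?_⟩
    · intro q hq s hs
      by_cases h : pi q = 0
      · have hfq : f q s = if s = sLo Q A q then 1 else 0 := by
          simp only [hfdef]; rw [if_pos h]
        rw [hfq]; split <;> norm_num
      · have hfq : f q s = x q s / pi q := by
          simp only [hfdef]; rw [if_neg h]
        rw [hfq]
        exact div_nonneg (hx0 q hq s hs) (hpinn q hq)
    · intro q hq
      by_cases h : pi q = 0
      · have hfq : ∀ s, f q s = if s = sLo Q A q then 1 else 0 := fun s => by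
          simp only [hfdef]; rw [if_pos h]
        rw [Finset.sum_congr rfl fun s _ => hfq s]
        rw [Finset.sum_ite_eq' (range (S + 1)) (sLo Q A q) (fun _ => (1:ℝ))]
        rw [if_pos (Finset.mem_range.mpr (Nat.lt_succ_of_le (sLo_le_S hAS hq)))]
      · have hfq : ∀ s, f q s = x q s / pi q := fun s => by
          simp only [hfdef]; rw [if_neg h]
        rw [Finset.sum_congr rfl fun s _ => hfq s, ← Finset.sum_div]
        exact div_self h
    · intro q hq s hs hband
      by_cases h : pi q = 0
      · have hfq : f q s = if s = sLo Q A q then 1 else 0 := by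
          simp only [hfdef]; rw [if_pos h]
        rw [hfq, if_neg]
        rintro rfl
        have := sLo_le_sHi (A := A) hAS hSQ hq
        omega
      · have hfq : f q s = x q s / pi q := by
          simp only [hfdef]; rw [if_neg h]
        rw [hfq, hxz q hq s hs hband, zero_div]
  have hstat : IsStationaryDist Q S A α f pi := by
    refine ⟨hpinn, hx1, ?_⟩
    intro j hj
    have L : ∀ i ∈ range (Q + 1), lam S A α f i j * pi i
        = ∑ s ∈ range (S + 1), x i s * (α * indArr A i s j + (1 - α) * indNoArr i s j) := by
      intro i hi
      have hi' : i ≤ Q := Nat.lt_succ_iff.mp (Finset.mem_range.mp hi)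
      rw [lam, Finset.sum_mul]
      refine Finset.sum_congr rfl fun s hs => ?_
      rw [mul_right_comm, hfx i hi' s hs]
    calc pi j = ∑ s ∈ range (S + 1), x j s := rfl
      _ = ∑ i ∈ range (Q + 1), ∑ s ∈ range (S + 1),
            x i s * (α * indArr A i s j + (1 - α) * indNoArr i s j) := (hxb j hj).symm
      _ = ∑ i ∈ range (Q + 1), lam S A α f i j * pi i := (Finset.sum_congr rfl L).symm
  refine ⟨f, pi, hfpol, hstat, ?_, ?_⟩
  · unfold powerFP powerLP
    refine Finset.sum_congr rfl fun q hq => Finset.sum_congr rfl fun s hs => ?_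
    rw [mul_assoc, hfx q (Nat.lt_succ_iff.mp (Finset.mem_range.mp hq)) s hs]
  · unfold delayFP delayLP
    congr 1
    refine Finset.sum_congr rfl fun q hq => ?_
    rw [← Finset.mul_sum]

/-- The achievable average power–delay pairs under policies coincide
with the power–delay pairs of LP points, and for every power budget `Pth` the two
constrained delay infima agree. -/
theorem achievable_region_eq_LP_region
    (Q S A : ℕ) (α : ℝ) (P : ℕ → ℝ)
    (hA : 1 ≤ A) (hAS : A ≤ S) (hSQ : S ≤ Q)
    (hα0 : 0 < α) (hα1 : α < 1)
    (hP : ∀ s ≤ S, 0 ≤ P s) :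
    ({p : ℝ × ℝ | ∃ f pi, IsPolicy Q S A f ∧ IsStationaryDist Q S A α f pi ∧
        p = (powerFP Q S P f pi, delayFP Q A α pi)}
      = {p : ℝ × ℝ | ∃ x, IsLP Q S A α x ∧
        p = (powerLP Q S P x, delayLP Q S A α x)}) ∧
    (∀ Pth : ℝ,
      sInf {d : ℝ | ∃ f pi, IsPolicy Q S A f ∧ IsStationaryDist Q S A α f pi ∧
          powerFP Q S P f pi ≤ Pth ∧ d = delayFP Q A α pi}
        = sInf {d : ℝ | ∃ x, IsLP Q S A α x ∧
          powerLP Q S P x ≤ Pth ∧ d = delayLP Q S A α x}) := by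
  have setEq :
      ({p : ℝ × ℝ | ∃ f pi, IsPolicy Q S A f ∧ IsStationaryDist Q S A α f pi ∧
          p = (powerFP Q S P f pi, delayFP Q A α pi)}
        = {p : ℝ × ℝ | ∃ x, IsLP Q S A α x ∧
          p = (powerLP Q S P x, delayLP Q S A α x)}) := by
    ext p
    simp only [Set.mem_setOf_eq]
    constructor
    · rintro ⟨f, pi, hf, hpi, rfl⟩
      obtain ⟨hLP, hpow, hdel⟩ := policy_to_LP Q S A α P f pi hf hpi
      exact ⟨_, hLP, by rw [hpow, hdel]⟩
    · rintro ⟨x, hx, rfl⟩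
      obtain ⟨f, pi, hf, hpi, hpow, hdel⟩ := LP_to_policy Q S A α P hAS hSQ x hx
      exact ⟨f, pi, hf, hpi, by rw [hpow, hdel]⟩
  refine ⟨setEq, fun Pth => ?_⟩
  congr 1
  ext d
  simp only [Set.mem_setOf_eq]
  constructor
  · rintro ⟨f, pi, hf, hpi, hle, rfl⟩
    obtain ⟨hLP, hpow, hdel⟩ := policy_to_LP Q S A α P f pi hf hpi
    exact ⟨_, hLP, hpow.le.trans hle, hdel.symm⟩
  · rintro ⟨x, hx, hle, rfl⟩
    obtain ⟨f, pi, hf, hpi, hpow, hdel⟩ := LP_to_policy Q S A α P hAS hSQ x hx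
    exact ⟨f, pi, hf, hpi, hpow.le.trans hle, hdel.symm⟩
end

section
/- Define the optimal delay-power tradeoff function V : ℝ → ℝ by V(p) = inf { D(x) : x an LP point with P̄(x) ≤ p }, and let Dom = { p ∈ ℝ : there exists an LP point x with P̄(x) ≤ p }. Then V is convex on Dom and antitone (nonincreasing) on Dom: for p1, p2 ∈ Dom with p1 ≤ p2 one has V(p2) ≤ V(p1), and for p1, p2 ∈ Dom and t ∈ [0,1], V(t·p1 + (1−t)·p2) ≤ t·V(p1) + (1−t)·V(p2). -/
open Finset

/-- `pi` is a stationary distribution of the queue-length Markov chain of policy `f`. -/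
def IsStationaryPi (Q S A : ℕ) (α : ℝ) (f : ℕ → ℕ → ℝ) (pi : ℕ → ℝ) : Prop :=
  (∀ q ≤ Q, 0 ≤ pi q) ∧
  (∑ q ∈ range (Q + 1), pi q = 1) ∧
  (∀ j ≤ Q, pi j = ∑ i ∈ range (Q + 1), lam S A α f i j * pi i)

section Aux

lemma delayLP_nonneg (Q S A : ℕ) (α : ℝ) (x : ℕ → ℕ → ℝ)
    (hA : 1 ≤ A) (hα0 : 0 < α) (hx : IsLP Q S A α x) :
    0 ≤ delayLP Q S A α x := by
  have hA' : (0:ℝ) < A := by exact_mod_cast Nat.lt_of_lt_of_le Nat.zero_lt_one hA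
  have h1 : (0:ℝ) ≤ 1 / (A * α) := by positivity
  refine mul_nonneg h1 ?_
  refine Finset.sum_nonneg fun q hq => Finset.sum_nonneg fun s hs => ?_
  have hq' := Nat.lt_succ_iff.mp (Finset.mem_range.mp hq)
  have hs' := Nat.lt_succ_iff.mp (Finset.mem_range.mp hs)
  exact mul_nonneg (Nat.cast_nonneg q) (hx.1 q hq' s hs')

lemma lp_comb (Q S A : ℕ) (α t : ℝ) (x1 x2 : ℕ → ℕ → ℝ)
    (ht0 : 0 ≤ t) (ht1 : t ≤ 1)
    (h1 : IsLP Q S A α x1) (h2 : IsLP Q S A α x2) :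
    IsLP Q S A α (fun q s => t * x1 q s + (1 - t) * x2 q s) := by
  have ht1' : 0 ≤ 1 - t := by linarith
  obtain ⟨h1a, h1b, h1c, h1d⟩ := h1
  obtain ⟨h2a, h2b, h2c, h2d⟩ := h2
  refine ⟨?_, ?_, ?_, ?_⟩
  · intro q hq s hs
    exact add_nonneg (mul_nonneg ht0 (h1a q hq s hs)) (mul_nonneg ht1' (h2a q hq s hs))
  · intro q hq s hs h
    simp [h1b q hq s hs h, h2b q hq s hs h]
  · simp only [Finset.sum_add_distrib, ← Finset.mul_sum]
    rw [h1c, h2c]; ring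
  · intro j hj
    simp only [add_mul, Finset.sum_add_distrib, mul_assoc, ← Finset.mul_sum]
    rw [h1d j hj, h2d j hj]

lemma power_comb (Q S : ℕ) (P : ℕ → ℝ) (t : ℝ) (x1 x2 : ℕ → ℕ → ℝ) :
    powerLP Q S P (fun q s => t * x1 q s + (1 - t) * x2 q s)
      = t * powerLP Q S P x1 + (1 - t) * powerLP Q S P x2 := by
  unfold powerLP
  rw [Finset.mul_sum, Finset.mul_sum, ← Finset.sum_add_distrib]
  refine Finset.sum_congr rfl fun q _ => ?_
  rw [Finset.mul_sum, Finset.mul_sum, ← Finset.sum_add_distrib]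
  refine Finset.sum_congr rfl fun s _ => ?_
  ring

lemma delay_comb (Q S A : ℕ) (α t : ℝ) (x1 x2 : ℕ → ℕ → ℝ) :
    delayLP Q S A α (fun q s => t * x1 q s + (1 - t) * x2 q s)
      = t * delayLP Q S A α x1 + (1 - t) * delayLP Q S A α x2 := by
  have h : ∑ q ∈ range (Q + 1), ∑ s ∈ range (S + 1), (q : ℝ) * (t * x1 q s + (1 - t) * x2 q s)
      = t * (∑ q ∈ range (Q + 1), ∑ s ∈ range (S + 1), (q : ℝ) * x1 q s)
        + (1 - t) * (∑ q ∈ range (Q + 1), ∑ s ∈ range (S + 1), (q : ℝ) * x2 q s) := by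
    rw [Finset.mul_sum, Finset.mul_sum, ← Finset.sum_add_distrib]
    refine Finset.sum_congr rfl fun q _ => ?_
    rw [Finset.mul_sum, Finset.mul_sum, ← Finset.sum_add_distrib]
    refine Finset.sum_congr rfl fun s _ => ?_
    ring
  unfold delayLP
  rw [h]
  ring

end Aux

/-- The optimal delay-power tradeoff function
`V(p) = inf { D(x) : x an LP point, P̄(x) ≤ p }` is nonincreasing and convex on its
domain `Dom = { p : ∃ LP point x with P̄(x) ≤ p }`. -/
theorem tradeoff_convex_antitone
    (Q S A : ℕ) (α : ℝ) (P : ℕ → ℝ)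
    (hA : 1 ≤ A) (hAS : A ≤ S) (hSQ : S ≤ Q)
    (hα0 : 0 < α) (hα1 : α < 1)
    (hP : ∀ s ≤ S, 0 ≤ P s)
    (V : ℝ → ℝ)
    (hV : ∀ p, V p = sInf {d : ℝ | ∃ x, IsLP Q S A α x ∧
        powerLP Q S P x ≤ p ∧ d = delayLP Q S A α x})
    (Dom : Set ℝ)
    (hDom : Dom = {p : ℝ | ∃ x, IsLP Q S A α x ∧ powerLP Q S P x ≤ p}) :
    (∀ p1 ∈ Dom, ∀ p2 ∈ Dom, p1 ≤ p2 → V p2 ≤ V p1) ∧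
    (∀ p1 ∈ Dom, ∀ p2 ∈ Dom, ∀ t : ℝ, 0 ≤ t → t ≤ 1 →
      V (t * p1 + (1 - t) * p2) ≤ t * V p1 + (1 - t) * V p2) := by
  have hSet : ∀ p : ℝ, {d : ℝ | ∃ x, IsLP Q S A α x ∧ powerLP Q S P x ≤ p ∧ d = delayLP Q S A α x} = {d : ℝ | ∃ x, IsLP Q S A α x ∧ powerLP Q S P x ≤ p ∧ d = delayLP Q S A α x} := fun _ => rfl
  have hbdd : ∀ p : ℝ, BddBelow {d : ℝ | ∃ x, IsLP Q S A α x ∧ powerLP Q S P x ≤ p ∧ d = delayLP Q S A α x} := by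
    intro p
    refine ⟨0, fun d hd => ?_⟩
    obtain ⟨x, hx, _, rfl⟩ := hd
    exact delayLP_nonneg Q S A α x hA hα0 hx
  have hne : ∀ p ∈ Dom, Set.Nonempty {d : ℝ | ∃ x, IsLP Q S A α x ∧ powerLP Q S P x ≤ p ∧ d = delayLP Q S A α x} := by
    intro p hp
    rw [hDom] at hp
    obtain ⟨x, hx, hpx⟩ := hp
    exact ⟨delayLP Q S A α x, x, hx, hpx, rfl⟩
  constructor
  · intro p1 hp1 p2 hp2 h12
    rw [hV p1, hV p2]
    refine csInf_le_csInf (hbdd p2) (hne p1 hp1) ?_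
    rintro d ⟨x, hx, hpx, rfl⟩
    exact ⟨x, hx, le_trans hpx h12, rfl⟩
  · intro p1 hp1 p2 hp2 t ht0 ht1
    have ht1' : 0 ≤ 1 - t := by linarith
    set Sc := {d : ℝ | ∃ x, IsLP Q S A α x ∧ powerLP Q S P x ≤ t * p1 + (1 - t) * p2 ∧ d = delayLP Q S A α x}
    have key : ∀ d1 ∈ {d : ℝ | ∃ x, IsLP Q S A α x ∧ powerLP Q S P x ≤ p1 ∧ d = delayLP Q S A α x},
        ∀ d2 ∈ {d : ℝ | ∃ x, IsLP Q S A α x ∧ powerLP Q S P x ≤ p2 ∧ d = delayLP Q S A α x},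
        sInf Sc ≤ t * d1 + (1 - t) * d2 := by
      rintro d1 ⟨x1, hx1, hp1', rfl⟩ d2 ⟨x2, hx2, hp2', rfl⟩
      have hmem : t * delayLP Q S A α x1 + (1 - t) * delayLP Q S A α x2 ∈ Sc := by
        refine ⟨fun q s => t * x1 q s + (1 - t) * x2 q s,
          lp_comb Q S A α t x1 x2 ht0 ht1 hx1 hx2, ?_, (delay_comb Q S A α t x1 x2).symm⟩
        rw [power_comb]
        have := mul_le_mul_of_nonneg_left hp1' ht0
        have := mul_le_mul_of_nonneg_left hp2' ht1'
        linarith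
      exact csInf_le (hbdd _) hmem
    rw [hV (t * p1 + (1 - t) * p2), hV p1, hV p2]
    by_contra hcon
    push_neg at hcon
    set V1 := sInf {d : ℝ | ∃ x, IsLP Q S A α x ∧ powerLP Q S P x ≤ p1 ∧ d = delayLP Q S A α x} with hV1
    set V2 := sInf {d : ℝ | ∃ x, IsLP Q S A α x ∧ powerLP Q S P x ≤ p2 ∧ d = delayLP Q S A α x} with hV2
    set ε := sInf Sc - (t * V1 + (1 - t) * V2) with hε
    have hεpos : 0 < ε := by simp only [hε]; linarith
    obtain ⟨d1, hd1, hd1'⟩ := exists_lt_of_csInf_lt (hne p1 hp1) (show V1 < V1 + ε by linarith)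
    obtain ⟨d2, hd2, hd2'⟩ := exists_lt_of_csInf_lt (hne p2 hp2) (show V2 < V2 + ε by linarith)
    have := key d1 hd1 d2 hd2
    have h1 : t * d1 ≤ t * (V1 + ε) := mul_le_mul_of_nonneg_left hd1'.le ht0
    have h2 : (1 - t) * d2 ≤ (1 - t) * (V2 + ε) := mul_le_mul_of_nonneg_left hd2'.le ht1'
    nlinarith
end

section
/- Define V : ℝ → ℝ by V(p) = inf { D(x) : x an LP point with P̄(x) ≤ p } and Dom = { p ∈ ℝ : there exists an LP point x with P̄(x) ≤ p }. Then V is piecewise linear on Dom: there exists a finite nonempty set F of pairs (a, b) ∈ ℝ × ℝ such that for every p ∈ Dom, V(p) = max_{(a,b) ∈ F} (a·p + b). -/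
open Finset

/-- `pi` is a stationary distribution of the queue-length Markov chain of policy `f`. -/
def IsStationaryQueue (Q S A : ℕ) (α : ℝ) (f : ℕ → ℕ → ℝ) (pi : ℕ → ℝ) : Prop :=
  (∀ q ≤ Q, 0 ≤ pi q) ∧
  (∑ q ∈ range (Q + 1), pi q = 1) ∧
  (∀ j ≤ Q, pi j = ∑ i ∈ range (Q + 1), lam S A α f i j * pi i)

/-- The finite candidate set of dual multipliers: `0` together with all nonnegative
crossing points of the lines `λ ↦ w.2 + λ * w.1`, `w ∈ W`. -/
noncomputable def crossSet (W : Finset (ℝ × ℝ)) : Finset ℝ := by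
  classical
  exact (insert (0:ℝ) ((W ×ˢ W).image fun uv => (uv.1.2 - uv.2.2) / (uv.2.1 - uv.1.1))).filter
    fun l => 0 ≤ l

lemma zero_mem_crossSet (W : Finset (ℝ × ℝ)) : (0:ℝ) ∈ crossSet W := by
  classical
  simp [crossSet]

lemma mem_crossSet_of_pair {W : Finset (ℝ × ℝ)} {u v : ℝ × ℝ} (hu : u ∈ W) (hv : v ∈ W)
    (h0 : 0 ≤ (u.2 - v.2) / (v.1 - u.1)) : (u.2 - v.2) / (v.1 - u.1) ∈ crossSet W := by
  classical
  simp only [crossSet, mem_filter, mem_insert, mem_image]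
  exact ⟨Or.inr ⟨(u, v), mem_product.2 ⟨hu, hv⟩, rfl⟩, h0⟩

lemma crossSet_nonneg {W : Finset (ℝ × ℝ)} {l : ℝ} (hl : l ∈ crossSet W) : 0 ≤ l := by
  classical
  exact (mem_filter.1 hl).2

/-- Root of a decreasing affine function lies between a point where it is nonnegative
and a later point where it is negative. -/
lemma root_lemma_dec {c s a b : ℝ} (ha : 0 ≤ c + a * s) (hb : c + b * s < 0) (hab : a < b) :
    s < 0 ∧ a ≤ -c / s ∧ -c / s < b := by
  have hs : s < 0 := by
    by_contra h
    push_neg at h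
    have := mul_le_mul_of_nonneg_right hab.le h
    linarith
  refine ⟨hs, ?_, ?_⟩
  · rw [le_div_iff_of_neg hs]; linarith
  · rw [div_lt_iff_of_neg hs]; linarith

/-- Root of an increasing affine function lies between a point where it is negative
and a later point where it is nonnegative. -/
lemma root_lemma_inc {c s a b : ℝ} (ha : c + a * s < 0) (hb : 0 ≤ c + b * s) (hab : a < b) :
    0 < s ∧ a < -c / s ∧ -c / s ≤ b := by
  have hs : 0 < s := by
    by_contra h
    push_neg at h
    have := mul_le_mul_of_nonpos_right hab.le h
    linarith
  refine ⟨hs, ?_, ?_⟩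
  · rw [lt_div_iff₀ hs]; linarith
  · rw [div_le_iff₀ hs]; linarith

/-- Attainment of the dual optimum at a candidate multiplier, together with a primal
optimal point in the convex hull. -/
lemma dual_attained (W : Finset (ℝ × ℝ)) (hW : W.Nonempty) (p : ℝ)
    (hp : ∃ u ∈ W, u.1 ≤ p) :
    ∃ l ∈ crossSet W, ∃ t ∈ convexHull ℝ (W : Set (ℝ × ℝ)),
      t.1 ≤ p ∧ t.2 = W.inf' hW (fun w => w.2 + l * (w.1 - p)) := by
  classical
  set φ : ℝ → ℝ := fun l => W.inf' hW (fun w => w.2 + l * (w.1 - p)) with hφdef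
  have h0 : (0:ℝ) ∈ crossSet W := zero_mem_crossSet W
  set Sstar : Finset ℝ :=
    (crossSet W).filter (fun l => ∃ u ∈ W, u.1 ≤ p ∧ u.2 + l * (u.1 - p) = φ l) with hSdef
  have hcne : (crossSet W).Nonempty := ⟨0, h0⟩
  set lam0 := (crossSet W).max' hcne with hlam0def
  have hlam0mem : lam0 ∈ crossSet W := (crossSet W).max'_mem hcne
  have hlam00 : 0 ≤ lam0 := crossSet_nonneg hlam0mem
  have hstep1 : lam0 ∈ Sstar := by
    obtain ⟨z, hzW, hzmin⟩ := W.exists_mem_eq_inf' hW (fun w => w.2 + lam0 * (w.1 - p))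
    by_cases hz1 : z.1 ≤ p
    · exact mem_filter.2 ⟨hlam0mem, z, hzW, hz1, hzmin.symm⟩
    · push_neg at hz1
      obtain ⟨u0, hu0W, hu0p⟩ := hp
      have hden : 0 < z.1 - u0.1 := by linarith
      set lc := (u0.2 - z.2) / (z.1 - u0.1) with hlcdef
      have hle : z.2 + lam0 * (z.1 - p) ≤ u0.2 + lam0 * (u0.1 - p) := by
        rw [← hzmin]; exact W.inf'_le _ hu0W
      have hlam0lc : lam0 ≤ lc := by
        rw [hlcdef, le_div_iff₀ hden]; linarith
      have hlc0 : 0 ≤ lc := le_trans hlam00 hlam0lc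
      have hlcmem : lc ∈ crossSet W := mem_crossSet_of_pair hu0W hzW hlc0
      have hlceq : lc = lam0 := le_antisymm ((crossSet W).le_max' _ hlcmem) hlam0lc
      have hc : lc * (z.1 - u0.1) = u0.2 - z.2 := div_mul_cancel₀ _ hden.ne'
      have heq : u0.2 + lam0 * (u0.1 - p) = z.2 + lam0 * (z.1 - p) := by
        rw [← hlceq]; linarith
      exact mem_filter.2 ⟨hlam0mem, u0, hu0W, hu0p, by rw [heq, ← hzmin]⟩
  have hSne : Sstar.Nonempty := ⟨lam0, hstep1⟩
  set lam := Sstar.min' hSne with hlamdef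
  have hlamS : lam ∈ Sstar := Sstar.min'_mem hSne
  obtain ⟨hlamC, u, huW, hup, humin⟩ := mem_filter.1 hlamS
  have hlam0 : 0 ≤ lam := crossSet_nonneg hlamC
  by_cases hHmin : ∃ v ∈ W, p < v.1 ∧ v.2 + lam * (v.1 - p) = φ lam
  · -- two-point primal solution with the power constraint tight
    obtain ⟨v, hvW, hpv, hvmin⟩ := hHmin
    have hden : 0 < v.1 - u.1 := by linarith
    set θ := (v.1 - p) / (v.1 - u.1) with hθdef
    have hθ0 : 0 ≤ θ := div_nonneg (by linarith) hden.le
    have hθ1 : θ ≤ 1 := by rw [hθdef, div_le_one hden]; linarith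
    have hθc : θ * (v.1 - u.1) = v.1 - p := div_mul_cancel₀ _ hden.ne'
    have hteq : θ * u.1 + (1 - θ) * v.1 = p := by linarith
    refine ⟨lam, hlamC, θ • u + (1 - θ) • v, ?_, ?_, ?_⟩
    · exact (convex_convexHull ℝ _) (subset_convexHull ℝ _ huW) (subset_convexHull ℝ _ hvW)
        hθ0 (by linarith) (by ring)
    · have h1 : (θ • u + (1 - θ) • v).1 = θ * u.1 + (1 - θ) * v.1 := by
        simp [Prod.smul_def, smul_eq_mul]
      rw [h1, hteq]
    · have h2 : (θ • u + (1 - θ) • v).2 = θ * u.2 + (1 - θ) * v.2 := by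
        simp [Prod.smul_def, smul_eq_mul]
      have e1 : θ * (u.2 + lam * (u.1 - p)) = θ * φ lam := by rw [humin]
      have e2 : (1 - θ) * (v.2 + lam * (v.1 - p)) = (1 - θ) * φ lam := by rw [hvmin]
      have e3 : lam * (θ * u.1 + (1 - θ) * v.1) = lam * p := by rw [hteq]
      rw [h2]
      nlinarith [e1, e2, e3]
  · -- otherwise the least such multiplier is `0`, one-point primal solution
    have hlamz : lam = 0 := by
      by_contra hne
      have hlpos : 0 < lam := lt_of_le_of_ne hlam0 (Ne.symm hne)
      have h0lt : (0:ℝ) ∈ (crossSet W).filter (· < lam) := mem_filter.2 ⟨h0, hlpos⟩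
      have hltne : ((crossSet W).filter (· < lam)).Nonempty := ⟨0, h0lt⟩
      set lam' := ((crossSet W).filter (· < lam)).max' hltne with hlam'def
      have hlam'mem := ((crossSet W).filter (· < lam)).max'_mem hltne
      have hlam'C : lam' ∈ crossSet W := (mem_filter.1 hlam'mem).1
      have hlam'lt : lam' < lam := (mem_filter.1 hlam'mem).2
      have hlam'0 : 0 ≤ lam' := crossSet_nonneg hlam'C
      have hnb : ∀ l ∈ crossSet W, l < lam → l ≤ lam' := fun l hl h2 =>
        ((crossSet W).filter (· < lam)).le_max' l (mem_filter.2 ⟨hl, h2⟩)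
      set lm := (lam' + lam) / 2 with hlmdef
      have hm1 : lam' < lm := by rw [hlmdef]; linarith
      have hm2 : lm < lam := by rw [hlmdef]; linarith
      have hlm0 : 0 ≤ lm := by linarith
      obtain ⟨w, hwW, hwmin⟩ := W.exists_mem_eq_inf' hW (fun w => w.2 + lm * (w.1 - p))
      have hkey2 : ∀ z ∈ W, w.2 + lam * (w.1 - p) ≤ z.2 + lam * (z.1 - p) := by
        intro z hzW
        by_contra hcon
        push_neg at hcon
        have hmz : w.2 + lm * (w.1 - p) ≤ z.2 + lm * (z.1 - p) := by
          rw [← hwmin]; exact W.inf'_le _ hzW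
        have ha : 0 ≤ (z.2 - w.2) + lm * (z.1 - w.1) := by linarith
        have hb : (z.2 - w.2) + lam * (z.1 - w.1) < 0 := by linarith
        obtain ⟨hs, h1, h2⟩ := root_lemma_dec ha hb hm2
        have hroot : -(z.2 - w.2) / (z.1 - w.1) = (w.2 - z.2) / (z.1 - w.1) := by ring_nf
        rw [hroot] at h1 h2
        have hlc0 : 0 ≤ (w.2 - z.2) / (z.1 - w.1) := le_trans hlm0 h1
        have := hnb _ (mem_crossSet_of_pair hwW hzW hlc0) h2
        linarith
      have hkey1 : ∀ z ∈ W, w.2 + lam' * (w.1 - p) ≤ z.2 + lam' * (z.1 - p) := by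
        intro z hzW
        by_contra hcon
        push_neg at hcon
        have hmz : w.2 + lm * (w.1 - p) ≤ z.2 + lm * (z.1 - p) := by
          rw [← hwmin]; exact W.inf'_le _ hzW
        have ha : (z.2 - w.2) + lam' * (z.1 - w.1) < 0 := by linarith
        have hb : 0 ≤ (z.2 - w.2) + lm * (z.1 - w.1) := by linarith
        obtain ⟨hs, h1, h2⟩ := root_lemma_inc ha hb hm1
        have hroot : -(z.2 - w.2) / (z.1 - w.1) = (w.2 - z.2) / (z.1 - w.1) := by ring_nf
        rw [hroot] at h1 h2
        have hlc0 : 0 ≤ (w.2 - z.2) / (z.1 - w.1) := le_trans hlam'0 h1.le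
        have := hnb _ (mem_crossSet_of_pair hwW hzW hlc0) (lt_of_le_of_lt h2 hm2)
        linarith
      have hwφ : w.2 + lam * (w.1 - p) = φ lam :=
        le_antisymm (Finset.le_inf' hW _ hkey2) (by rw [hφdef]; exact W.inf'_le _ hwW)
      push_neg at hHmin
      have hw1 : w.1 ≤ p := by
        by_contra hgt
        push_neg at hgt
        exact hHmin w hwW hgt hwφ
      have hwφ' : w.2 + lam' * (w.1 - p) = φ lam' :=
        le_antisymm (Finset.le_inf' hW _ hkey1) (by rw [hφdef]; exact W.inf'_le _ hwW)
      have : lam' ∈ Sstar := mem_filter.2 ⟨hlam'C, w, hwW, hw1, hwφ'⟩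
      have := Sstar.min'_le _ this
      linarith
    refine ⟨lam, hlamC, u, subset_convexHull ℝ _ huW, hup, ?_⟩
    have h4 : u.2 + lam * (u.1 - p) = u.2 := by rw [hlamz]; ring
    exact h4 ▸ humin

/-- Linear lower bounds on a finite set extend to its convex hull. -/
lemma halfspace_bound {W : Finset (ℝ × ℝ)} {c1 c2 m : ℝ}
    (hw : ∀ w ∈ W, m ≤ c1 * w.1 + c2 * w.2) :
    ∀ t ∈ convexHull ℝ (W : Set (ℝ × ℝ)), m ≤ c1 * t.1 + c2 * t.2 := by
  intro t ht
  have hconv : Convex ℝ {t : ℝ × ℝ | m ≤ c1 * t.1 + c2 * t.2} := by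
    intro x hx y hy a b ha hb hab
    simp only [Set.mem_setOf_eq, Prod.fst_add, Prod.snd_add, Prod.smul_fst, Prod.smul_snd,
      smul_eq_mul] at *
    have hm : a * m + b * m = m := by rw [← add_mul, hab, one_mul]
    nlinarith [mul_le_mul_of_nonneg_left hx ha, mul_le_mul_of_nonneg_left hy hb, hm]
  exact convexHull_min (fun w hw' => hw w hw') hconv ht

/-- The optimal-value function of the finitely-generated parametric problem is the
pointwise maximum of finitely many affine functions. -/
lemma lower_env (W : Finset (ℝ × ℝ)) (hW : W.Nonempty) :
    ∃ (F : Finset (ℝ × ℝ)) (hF : F.Nonempty),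
      ∀ p : ℝ, (∃ t ∈ convexHull ℝ (W : Set (ℝ × ℝ)), t.1 ≤ p) →
        sInf {d : ℝ | ∃ t ∈ convexHull ℝ (W : Set (ℝ × ℝ)), t.1 ≤ p ∧ d = t.2}
          = F.sup' hF fun ab => ab.1 * p + ab.2 := by
  classical
  have hcne : (crossSet W).Nonempty := ⟨0, zero_mem_crossSet W⟩
  refine ⟨(crossSet W).image fun l => (-l, W.inf' hW fun w => w.2 + l * w.1),
    hcne.image _, ?_⟩
  intro p hp
  obtain ⟨t0, ht0hull, ht0p⟩ := hp
  set Sp := {d : ℝ | ∃ t ∈ convexHull ℝ (W : Set (ℝ × ℝ)), t.1 ≤ p ∧ d = t.2} with hSp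
  have hSpne : Sp.Nonempty := ⟨t0.2, t0, ht0hull, ht0p, rfl⟩
  -- weak duality
  have hweak : ∀ l ∈ crossSet W, ∀ d ∈ Sp,
      -l * p + (W.inf' hW fun w => w.2 + l * w.1) ≤ d := by
    intro l hl d hd
    obtain ⟨t, hthull, htp, rfl⟩ := hd
    have hl0 : 0 ≤ l := crossSet_nonneg hl
    have hb : (W.inf' hW fun w => w.2 + l * w.1) ≤ l * t.1 + 1 * t.2 := by
      refine halfspace_bound (fun w hw' => ?_) t hthull
      have := W.inf'_le (fun w => w.2 + l * w.1) hw'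
      linarith
    nlinarith [mul_le_mul_of_nonneg_left htp hl0]
  have hbdd : BddBelow Sp := by
    refine ⟨-0 * p + (W.inf' hW fun w => w.2 + 0 * w.1), fun d hd => ?_⟩
    exact hweak 0 (zero_mem_crossSet W) d hd
  -- the point in `W` with least first coordinate is feasible
  have hpW : ∃ u ∈ W, u.1 ≤ p := by
    obtain ⟨u, huW, humin⟩ := W.exists_mem_eq_inf' hW Prod.fst
    refine ⟨u, huW, le_trans ?_ ht0p⟩
    have : ∀ t ∈ convexHull ℝ (W : Set (ℝ × ℝ)),
        (W.inf' hW Prod.fst) ≤ 1 * t.1 + 0 * t.2 := by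
      refine halfspace_bound fun w hw' => ?_
      have := W.inf'_le Prod.fst hw'
      simpa only [one_mul, zero_mul, add_zero] using this
    have h2 := this t0 ht0hull
    rw [humin] at h2
    linarith
  apply le_antisymm
  · -- attainment : csInf ≤ sup'
    obtain ⟨l, hlC, t, hthull, htp, hteq⟩ := dual_attained W hW p hpW
    have htSp : t.2 ∈ Sp := ⟨t, hthull, htp, rfl⟩
    have hφb : (W.inf' hW fun w => w.2 + l * (w.1 - p)) =
        -l * p + (W.inf' hW fun w => w.2 + l * w.1) := by
      apply le_antisymm
      · obtain ⟨z, hzW, hzeq⟩ := W.exists_mem_eq_inf' hW (fun w => w.2 + l * w.1)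
        have := W.inf'_le (fun w => w.2 + l * (w.1 - p)) hzW
        rw [hzeq]
        linarith
      · refine Finset.le_inf' hW _ fun w hw' => ?_
        have := W.inf'_le (fun w => w.2 + l * w.1) hw'
        linarith
    refine le_trans (csInf_le hbdd htSp) ?_
    rw [hteq, hφb]
    have hmem : ((-l, W.inf' hW fun w => w.2 + l * w.1) : ℝ × ℝ) ∈
        (crossSet W).image fun l => ((-l, W.inf' hW fun w => w.2 + l * w.1) : ℝ × ℝ) :=
      mem_image.2 ⟨l, hlC, rfl⟩
    exact Finset.le_sup' (fun ab : ℝ × ℝ => ab.1 * p + ab.2) hmem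
  · -- weak duality : sup' ≤ csInf
    refine le_csInf hSpne fun d hd => ?_
    refine Finset.sup'_le _ _ fun ab hab => ?_
    obtain ⟨l, hlC, rfl⟩ := mem_image.1 hab
    exact hweak l hlC d hd

/-- Index type for the LP variables. -/
abbrev QSIdx (Q S : ℕ) := Fin (Q + 1) × Fin (S + 1)

/-- The linear functional `e ↦ ∑ k, c k * e k`. -/
noncomputable def coefL (Q S : ℕ) (c : QSIdx Q S → ℝ) : ((QSIdx Q S) → ℝ) →ₗ[ℝ] ℝ :=
  ∑ k, c k • LinearMap.proj k

lemma coefL_apply (Q S : ℕ) (c : QSIdx Q S → ℝ) (e : QSIdx Q S → ℝ) :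
    coefL Q S c e = ∑ k, c k * e k := by
  simp [coefL, LinearMap.sum_apply, LinearMap.smul_apply, LinearMap.proj_apply, smul_eq_mul]

/-- Index type for the LP constraints. -/
abbrev ConIdx (Q S : ℕ) := (QSIdx Q S) ⊕ ((QSIdx Q S) ⊕ (Bool ⊕ (Fin (Q + 1) × Bool)))

/-- The balance-constraint coefficient of variable `k` in the equation for state `j`. -/
noncomputable def balCoef (Q S A : ℕ) (α : ℝ) (j : Fin (Q + 1)) (k : QSIdx Q S) : ℝ :=
  (α * indArr A k.1 k.2 j + (1 - α) * indNoArr k.1 k.2 j) - (if k.1 = j then 1 else 0)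

/-- The linear functionals of the LP constraints. -/
noncomputable def conL (Q S A : ℕ) (α : ℝ) : ConIdx Q S → ((QSIdx Q S → ℝ) →ₗ[ℝ] ℝ)
  | .inl k => -(LinearMap.proj k)
  | .inr (.inl k) => LinearMap.proj k
  | .inr (.inr (.inl b)) =>
      if b then coefL Q S (fun _ => 1) else -(coefL Q S fun _ => 1)
  | .inr (.inr (.inr jb)) =>
      if jb.2 then coefL Q S (balCoef Q S A α jb.1) else -(coefL Q S (balCoef Q S A α jb.1))

/-- The right-hand sides of the LP constraints. -/
noncomputable def conB (Q S A : ℕ) : ConIdx Q S → ℝ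
  | .inl _ => 0
  | .inr (.inl k) => if ((k.2 : ℕ) < sLo Q A k.1 ∨ sHi S k.1 < (k.2 : ℕ)) then 0 else 1
  | .inr (.inr (.inl b)) => if b then 1 else -1
  | .inr (.inr (.inr _)) => 0

/-- Extension of a finitely indexed vector to a function on `ℕ × ℕ` (zero outside the range). -/
noncomputable def toX (Q S : ℕ) (e : QSIdx Q S → ℝ) : ℕ → ℕ → ℝ := fun q s =>
  if h : q < Q + 1 ∧ s < S + 1 then e (⟨q, h.1⟩, ⟨s, h.2⟩) else 0

lemma toX_coe (Q S : ℕ) (e : QSIdx Q S → ℝ) (k : QSIdx Q S) :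
    toX Q S e k.1 k.2 = e k := by
  rcases k with ⟨⟨q, hq⟩, ⟨s, hs⟩⟩
  simp [toX, hq, hs]

lemma dsum_eq_fin (Q S : ℕ) (g : ℕ → ℕ → ℝ) :
    ∑ q ∈ range (Q + 1), ∑ s ∈ range (S + 1), g q s = ∑ k : QSIdx Q S, g k.1 k.2 := by
  rw [Fintype.sum_prod_type, ← Fin.sum_univ_eq_sum_range (fun q => ∑ s ∈ range (S + 1), g q s)]
  exact Finset.sum_congr rfl fun q _ => (Fin.sum_univ_eq_sum_range _ _).symm

lemma dsum_congr {n m : ℕ} {f g : ℕ → ℕ → ℝ} (h : ∀ q < n, ∀ s < m, f q s = g q s) :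
    ∑ q ∈ range n, ∑ s ∈ range m, f q s = ∑ q ∈ range n, ∑ s ∈ range m, g q s :=
  Finset.sum_congr rfl fun q hq => Finset.sum_congr rfl fun s hs =>
    h q (mem_range.1 hq) s (mem_range.1 hs)

/-- Value of the balance functional. -/
lemma bal_apply (Q S A : ℕ) (α : ℝ) (e : QSIdx Q S → ℝ) (j : Fin (Q + 1)) :
    coefL Q S (balCoef Q S A α j) e
      = (∑ i ∈ range (Q + 1), ∑ s ∈ range (S + 1),
          toX Q S e i s * (α * indArr A i s j + (1 - α) * indNoArr i s j))
        - ∑ s ∈ range (S + 1), toX Q S e j s := by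
  have h1 : ∑ i ∈ range (Q + 1), ∑ s ∈ range (S + 1),
      toX Q S e i s * (α * indArr A i s j + (1 - α) * indNoArr i s j)
      = ∑ k : QSIdx Q S, e k * (α * indArr A k.1 k.2 j + (1 - α) * indNoArr k.1 k.2 j) := by
    rw [dsum_eq_fin]
    exact Finset.sum_congr rfl fun k _ => by rw [toX_coe]
  have h2 : ∑ s ∈ range (S + 1), toX Q S e j s = ∑ s : Fin (S + 1), e (j, s) := by
    rw [← Fin.sum_univ_eq_sum_range (fun s => toX Q S e j s)]
    exact Finset.sum_congr rfl fun s _ => toX_coe Q S e (j, s)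
  have h3 : ∑ k : QSIdx Q S, (if k.1 = j then (1:ℝ) else 0) * e k
      = ∑ s : Fin (S + 1), e (j, s) := by
    rw [Fintype.sum_prod_type]
    have hq : ∀ q : Fin (Q + 1), ∑ s : Fin (S + 1), (if q = j then (1:ℝ) else 0) * e (q, s)
        = if q = j then ∑ s : Fin (S + 1), e (j, s) else 0 := by
      intro q
      by_cases hqj : q = j
      · subst hqj; simp
      · simp [hqj]
    rw [Finset.sum_congr rfl fun q _ => hq q]
    simp
  rw [coefL_apply, h1, h2, ← h3, ← Finset.sum_sub_distrib]
  exact Finset.sum_congr rfl fun k _ => by unfold balCoef; ring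

/-- Membership in the constraint polytope is equivalent to `IsLP` of the extension. -/
lemma mem_K_iff (Q S A : ℕ) (α : ℝ) (e : QSIdx Q S → ℝ) :
    (∀ i, conL Q S A α i e ≤ conB Q S A i) ↔ IsLP Q S A α (toX Q S e) := by
  constructor
  · intro h
    have hnn : ∀ k : QSIdx Q S, 0 ≤ e k := by
      intro k
      have := h (.inl k)
      simp only [conL, conB, LinearMap.neg_apply, LinearMap.proj_apply] at this
      linarith
    have hup : ∀ k : QSIdx Q S,
        e k ≤ if ((k.2 : ℕ) < sLo Q A k.1 ∨ sHi S k.1 < (k.2 : ℕ)) then 0 else 1 := by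
      intro k
      have := h (.inr (.inl k))
      simpa only [conL, conB, LinearMap.proj_apply] using this
    have hsum : ∑ k : QSIdx Q S, e k = 1 := by
      have h1 := h (.inr (.inr (.inl true)))
      have h2 := h (.inr (.inr (.inl false)))
      norm_num [conL, conB, coefL_apply] at h1 h2
      linarith
    have hbal : ∀ j : Fin (Q + 1), coefL Q S (balCoef Q S A α j) e = 0 := by
      intro j
      have h1 := h (.inr (.inr (.inr (j, true))))
      have h2 := h (.inr (.inr (.inr (j, false))))
      norm_num [conL, conB] at h1 h2
      linarith
    refine ⟨?_, ?_, ?_, ?_⟩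
    · intro q hq s hs
      have hk : q < Q + 1 ∧ s < S + 1 := ⟨by omega, by omega⟩
      have : toX Q S e q s = e (⟨q, hk.1⟩, ⟨s, hk.2⟩) := by simp [toX, hk]
      rw [this]; exact hnn _
    · intro q hq s hs hforb
      have hk : q < Q + 1 ∧ s < S + 1 := ⟨by omega, by omega⟩
      set k : QSIdx Q S := (⟨q, hk.1⟩, ⟨s, hk.2⟩) with hkdef
      have hx : toX Q S e q s = e k := by simp [toX, hk, hkdef]
      have hcond : ((k.2 : ℕ) < sLo Q A k.1 ∨ sHi S k.1 < (k.2 : ℕ)) := by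
        simpa [hkdef] using hforb
      have := hup k
      rw [if_pos hcond] at this
      rw [hx]
      exact le_antisymm this (hnn k)
    · rw [dsum_eq_fin]
      rw [Finset.sum_congr rfl fun k _ => toX_coe Q S e k]
      exact hsum
    · intro j hj
      have hbal' := hbal ⟨j, by omega⟩
      rw [bal_apply] at hbal'
      have : ((⟨j, by omega⟩ : Fin (Q + 1)) : ℕ) = j := rfl
      rw [this] at hbal'
      linarith [hbal']
  · rintro ⟨hnn, hzero, hsum, hbal⟩
    have hnn' : ∀ k : QSIdx Q S, 0 ≤ e k := by
      intro k
      rw [← toX_coe Q S e k]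
      exact hnn k.1 (by omega) k.2 (by omega)
    have hsum' : ∑ k : QSIdx Q S, e k = 1 := by
      rw [← Finset.sum_congr rfl fun k _ => toX_coe Q S e k, ← dsum_eq_fin]
      exact hsum
    intro i
    match i with
    | .inl k =>
      simp only [conL, conB, LinearMap.neg_apply, LinearMap.proj_apply]
      linarith [hnn' k]
    | .inr (.inl k) =>
      simp only [conL, conB, LinearMap.proj_apply]
      by_cases hc : ((k.2 : ℕ) < sLo Q A k.1 ∨ sHi S k.1 < (k.2 : ℕ))
      · rw [if_pos hc]
        rw [← toX_coe Q S e k]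
        rw [hzero k.1 (by omega) k.2 (by omega) hc]
      · rw [if_neg hc]
        rw [← hsum']
        exact Finset.single_le_sum (fun k _ => hnn' k) (Finset.mem_univ k)
    | .inr (.inr (.inl b)) =>
      cases b <;> norm_num [conL, conB, coefL_apply] <;> linarith [hsum']
    | .inr (.inr (.inr jb)) =>
      have hb : coefL Q S (balCoef Q S A α jb.1) e = 0 := by
        rw [bal_apply]
        have := hbal jb.1 (by omega)
        linarith [this]
      rcases jb with ⟨j, b⟩
      cases b <;> norm_num [conL, conB] <;> simp only at hb <;> rw [hb]
/-- Restriction of a function on `ℕ × ℕ` to the finite index set. -/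
noncomputable def eOf (Q S : ℕ) (x : ℕ → ℕ → ℝ) : QSIdx Q S → ℝ := fun k => x k.1 k.2

lemma powerLP_toX (Q S : ℕ) (P : ℕ → ℝ) (e : QSIdx Q S → ℝ) :
    powerLP Q S P (toX Q S e) = ∑ k : QSIdx Q S, P k.2 * e k := by
  unfold powerLP
  rw [dsum_eq_fin]
  exact Finset.sum_congr rfl fun k _ => by rw [toX_coe]

lemma delayLP_toX (Q S A : ℕ) (α : ℝ) (e : QSIdx Q S → ℝ) :
    delayLP Q S A α (toX Q S e) = (1 / (A * α)) * ∑ k : QSIdx Q S, (k.1 : ℝ) * e k := by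
  unfold delayLP
  rw [dsum_eq_fin]
  congr 1
  exact Finset.sum_congr rfl fun k _ => by rw [toX_coe]

lemma toX_eOf_eq (Q S : ℕ) (x : ℕ → ℕ → ℝ) :
    ∀ q ≤ Q, ∀ s ≤ S, toX Q S (eOf Q S x) q s = x q s := by
  intro q hq s hs
  have h : q < Q + 1 ∧ s < S + 1 := ⟨by omega, by omega⟩
  simp [toX, eOf, h]

lemma isLP_transfer (Q S A : ℕ) (α : ℝ) (x : ℕ → ℕ → ℝ) (hx : IsLP Q S A α x) :
    IsLP Q S A α (toX Q S (eOf Q S x)) := by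
  obtain ⟨hnn, hz, hsum, hbal⟩ := hx
  have he := toX_eOf_eq Q S x
  refine ⟨?_, ?_, ?_, ?_⟩
  · intro q hq s hs; rw [he q hq s hs]; exact hnn q hq s hs
  · intro q hq s hs hf; rw [he q hq s hs]; exact hz q hq s hs hf
  · rw [dsum_congr (f := fun q s => toX Q S (eOf Q S x) q s) (g := fun q s => x q s)
      (fun q hq s hs => he q (by omega) s (by omega))]
    exact hsum
  · intro j hj
    rw [dsum_congr (fun i hi s hs => by rw [he i (by omega) s (by omega)]),
      Finset.sum_congr rfl fun s hs => he j hj s (by have := mem_range.1 hs; omega)]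
    exact hbal j hj
    
lemma powerLP_transfer (Q S : ℕ) (P : ℕ → ℝ) (x : ℕ → ℕ → ℝ) :
    powerLP Q S P (toX Q S (eOf Q S x)) = powerLP Q S P x := by
  unfold powerLP
  exact dsum_congr fun q hq s hs => by
    rw [toX_eOf_eq Q S x q (by omega) s (by omega)]

lemma delayLP_transfer (Q S A : ℕ) (α : ℝ) (x : ℕ → ℕ → ℝ) :
    delayLP Q S A α (toX Q S (eOf Q S x)) = delayLP Q S A α x := by
  unfold delayLP
  congr 1
  exact dsum_congr fun q hq s hs => by
    rw [toX_eOf_eq Q S x q (by omega) s (by omega)]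

/-- An explicit LP point : stationary distribution of the "serve everything" policy on `{0, A}`. -/
noncomputable def xhat (A : ℕ) (α : ℝ) : ℕ → ℕ → ℝ := fun q s =>
  if q = 0 ∧ s = 0 then 1 - α else if q = A ∧ s = A then α else 0

lemma xhat_sum (Q S A : ℕ) (α : ℝ) (hA : 1 ≤ A) (hAS : A ≤ S) (hSQ : S ≤ Q)
    (c : ℕ → ℕ → ℝ) :
    ∑ q ∈ range (Q + 1), ∑ s ∈ range (S + 1), xhat A α q s * c q s
      = (1 - α) * c 0 0 + α * c A A := by
  have h0S : 0 ∈ range (S + 1) := mem_range.2 (by omega)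
  have hAS' : A ∈ range (S + 1) := mem_range.2 (by omega)
  have inner0 : ∑ s ∈ range (S + 1), xhat A α 0 s * c 0 s = (1 - α) * c 0 0 := by
    rw [Finset.sum_eq_single_of_mem 0 h0S]
    · simp [xhat]
    · intro s _ hs
      have : xhat A α 0 s = 0 := by
        simp only [xhat]
        rw [if_neg (by omega), if_neg (by omega)]
      rw [this, zero_mul]
  have innerA : ∑ s ∈ range (S + 1), xhat A α A s * c A s = α * c A A := by
    rw [Finset.sum_eq_single_of_mem A hAS']
    · simp only [xhat]
      rw [if_neg (by omega)]
      simp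
    · intro s _ hs
      have : xhat A α A s = 0 := by
        simp only [xhat]
        rw [if_neg (by omega), if_neg (by omega)]
      rw [this, zero_mul]
  have hsub : ({0, A} : Finset ℕ) ⊆ range (Q + 1) := by
    intro q hq
    simp only [Finset.mem_insert, Finset.mem_singleton] at hq
    rcases hq with rfl | rfl <;> exact mem_range.2 (by omega)
  rw [← Finset.sum_subset hsub]
  · rw [Finset.sum_pair (by omega : (0:ℕ) ≠ A), inner0, innerA]
  · intro q _ hq
    simp only [Finset.mem_insert, Finset.mem_singleton] at hq
    push_neg at hq
    apply Finset.sum_eq_zero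
    intro s _
    have : xhat A α q s = 0 := by
      simp only [xhat]
      rw [if_neg (by omega), if_neg (by omega)]
    rw [this, zero_mul]

lemma isLP_xhat (Q S A : ℕ) (α : ℝ) (hA : 1 ≤ A) (hAS : A ≤ S) (hSQ : S ≤ Q)
    (hα0 : 0 < α) (hα1 : α < 1) : IsLP Q S A α (xhat A α) := by
  refine ⟨?_, ?_, ?_, ?_⟩
  · intro q _ s _
    simp only [xhat]
    split_ifs <;> linarith
  · intro q hq s hs hf
    simp only [xhat]
    rw [if_neg, if_neg]
    · rintro ⟨rfl, rfl⟩
      simp only [sLo, sHi] at hf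
      omega
    · rintro ⟨rfl, rfl⟩
      simp only [sLo, sHi] at hf
      omega
  · have := xhat_sum Q S A α hA hAS hSQ (fun _ _ => 1)
    simp only [mul_one] at this
    calc ∑ q ∈ range (Q + 1), ∑ s ∈ range (S + 1), xhat A α q s
        = ∑ q ∈ range (Q + 1), ∑ s ∈ range (S + 1), xhat A α q s * 1 := by
          simp
      _ = 1 := by rw [xhat_sum Q S A α hA hAS hSQ (fun _ _ => 1)]; ring
  · intro j hj
    rw [xhat_sum Q S A α hA hAS hSQ
      (fun i s => α * indArr A i s j + (1 - α) * indNoArr i s j)]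
    have hiA0 : indArr A 0 0 j = if A = j then 1 else 0 := by
      simp only [indArr]
      split_ifs with h1 h2 h2 <;> [rfl; omega; omega; rfl]
    have hiAA : indArr A A A j = if A = j then 1 else 0 := by
      simp only [indArr]
      split_ifs with h1 h2 h2 <;> [rfl; omega; omega; rfl]
    have hin0 : indNoArr 0 0 j = if 0 = j then 1 else 0 := by
      simp only [indNoArr]
      split_ifs with h1 h2 h2 <;> [rfl; omega; omega; rfl]
    have hinA : indNoArr A A j = if 0 = j then 1 else 0 := by
      simp only [indNoArr]
      split_ifs with h1 h2 h2 <;> [rfl; omega; omega; rfl]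
    rw [hiA0, hiAA, hin0, hinA]
    by_cases hj0 : j = 0
    · subst hj0
      rw [if_neg (by omega : ¬ A = 0), if_pos rfl]
      rw [Finset.sum_eq_single_of_mem 0 (mem_range.2 (by omega))]
      · simp [xhat]; ring
      · intro s _ hs
        simp only [xhat]
        rw [if_neg (by omega), if_neg (by omega)]
    · by_cases hjA : j = A
      · rw [hjA]
        rw [if_pos rfl, if_neg (by omega)]
        rw [Finset.sum_eq_single_of_mem A (mem_range.2 (by omega))]
        · simp only [xhat]
          rw [if_neg (by omega)]
          split_ifs with hc
          · ring
          · simp at hc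
        · intro s _ hs
          simp only [xhat]
          rw [if_neg (by omega), if_neg (by omega)]
      · rw [if_neg (by omega), if_neg (by omega)]
        rw [Finset.sum_eq_zero]
        · ring
        · intro s _
          simp only [xhat]
          rw [if_neg (by omega), if_neg (by omega)]

/-- A compact set in `κ → ℝ` cut out by finitely many linear inequalities is the convex hull
of a finite set. -/
lemma polytope_eq_convexHull_finset {κ ι : Type*} [Fintype κ] [Fintype ι] [Nonempty ι]
    (cL : ι → ((κ → ℝ) →ₗ[ℝ] ℝ)) (cb : ι → ℝ)
    (hcomp : IsCompact {x : κ → ℝ | ∀ i, cL i x ≤ cb i}) :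
    ∃ W : Finset (κ → ℝ), (W : Set (κ → ℝ)) ⊆ {x | ∀ i, cL i x ≤ cb i} ∧
      {x : κ → ℝ | ∀ i, cL i x ≤ cb i} = convexHull ℝ (W : Set (κ → ℝ)) := by
  classical
  set K : Set (κ → ℝ) := {x | ∀ i, cL i x ≤ cb i} with hK
  have hconv : Convex ℝ K := by
    intro x hx y hy a b ha hb hab
    intro i
    have : cL i (a • x + b • y) = a * cL i x + b * cL i y := by
      simp [map_add, map_smul, smul_eq_mul]
    rw [this]
    calc a * cL i x + b * cL i y ≤ a * cb i + b * cb i := by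
          exact add_le_add (mul_le_mul_of_nonneg_left (hx i) ha)
            (mul_le_mul_of_nonneg_left (hy i) hb)
      _ = cb i := by rw [← add_mul, hab, one_mul]
  -- extreme points are determined by their active sets, hence finitely many
  have hfin : (K.extremePoints ℝ).Finite := by
    have hinj : Set.InjOn (fun x => {i | cL i x = cb i}) (K.extremePoints ℝ) := by
      intro x hx y hy hxy
      by_contra hne
      have hxK : x ∈ K := hx.1
      have hyK : y ∈ K := hy.1
      set z := y - x with hz
      have hz0 : z ≠ 0 := sub_ne_zero.2 (Ne.symm hne)
      set ε : ℝ := Finset.univ.inf' Finset.univ_nonempty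
        (fun i => if cL i x = cb i then 1 else (cb i - cL i x) / (|cL i z| + 1)) with hε
      have hεpos : 0 < ε := by
        rw [hε]
        rw [Finset.lt_inf'_iff]
        intro i _
        by_cases h : cL i x = cb i
        · simp [h]
        · simp only [h, if_false]
          have h1 : 0 < cb i - cL i x := sub_pos.2 (lt_of_le_of_ne (hxK i) h)
          positivity
      have hbound : ∀ i, cL i x + ε * |cL i z| ≤ cb i ∨ cL i z = 0 := by
        intro i
        by_cases h : cL i x = cb i
        · right
          have hyi : cL i y = cb i := by
            have hxy' : {j | cL j x = cb j} = {j | cL j y = cb j} := hxy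
            have hmem : i ∈ {j | cL j x = cb j} := h
            rw [hxy'] at hmem
            exact hmem
          simp [hz, map_sub, hyi, h]
        · left
          have h1 : 0 < cb i - cL i x := sub_pos.2 (lt_of_le_of_ne (hxK i) h)
          have h2 : ε ≤ (cb i - cL i x) / (|cL i z| + 1) := by
            rw [hε]
            have := Finset.inf'_le
              (fun i => if cL i x = cb i then 1 else (cb i - cL i x) / (|cL i z| + 1))
              (Finset.mem_univ i)
            simpa only [h, ↓reduceIte] using this
          have h3 : 0 ≤ |cL i z| := abs_nonneg _
          have h4 : ε * (|cL i z| + 1) ≤ cb i - cL i x := by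
            rw [← div_mul_cancel₀ (cb i - cL i x) (by positivity : (|cL i z| + 1) ≠ 0)]
            exact mul_le_mul_of_nonneg_right h2 (by positivity)
          nlinarith
      have hmemK : ∀ (s : ℝ), s = 1 ∨ s = -1 → x + (s * ε) • z ∈ K := by
        intro s hs i
        have : cL i (x + (s * ε) • z) = cL i x + s * ε * cL i z := by
          simp [map_add, map_smul, smul_eq_mul]
        rw [this]
        rcases hbound i with hb | hb
        · have habs : s * ε * cL i z ≤ ε * |cL i z| := by
            rcases hs with rfl | rfl
            · simpa using (le_abs_self (cL i z)).trans_eq' (by ring) |>.trans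
                (le_of_eq rfl) |>.trans_eq rfl |> fun h => by
                  nlinarith [le_abs_self (cL i z), hεpos.le]
            · nlinarith [neg_abs_le (cL i z), hεpos.le]
          linarith
        · simp [hb]
          exact hxK i
      have h1K : x + ε • z ∈ K := by
        have := hmemK 1 (Or.inl rfl)
        simpa using this
      have h2K : x - ε • z ∈ K := by
        have := hmemK (-1) (Or.inr rfl)
        have heq : x + ((-1 : ℝ) * ε) • z = x - ε • z := by
          rw [neg_one_mul, neg_smul]; abel
        rwa [heq] at this
      have hseg : x ∈ openSegment ℝ (x - ε • z) (x + ε • z) := by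
        refine ⟨1/2, 1/2, by norm_num, by norm_num, by norm_num, ?_⟩
        module
      have := hx.2 h2K h1K hseg
      rw [sub_eq_self] at this
      exact hz0 (by simpa [smul_eq_zero, hεpos.ne'] using this)
    exact Set.Finite.of_finite_image (Set.toFinite _) hinj
  -- Krein-Milman
  have hKM : closure (convexHull ℝ (K.extremePoints ℝ)) = K :=
    closure_convexHull_extremePoints hcomp hconv
  have hclosed : IsClosed (convexHull ℝ (K.extremePoints ℝ)) :=
    hfin.isClosed_convexHull ℝ
  refine ⟨hfin.toFinset, ?_, ?_⟩
  · rw [Set.Finite.coe_toFinset]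
    exact (extremePoints_subset)
  · rw [Set.Finite.coe_toFinset, ← hclosed.closure_eq, hKM]

lemma K_compact (Q S A : ℕ) (α : ℝ) :
    IsCompact {e : QSIdx Q S → ℝ | ∀ i, conL Q S A α i e ≤ conB Q S A i} := by
  apply IsCompact.of_isClosed_subset (isCompact_stdSimplex ℝ (QSIdx Q S))
  · have hrw : {e : QSIdx Q S → ℝ | ∀ i, conL Q S A α i e ≤ conB Q S A i}
        = ⋂ i, (conL Q S A α i) ⁻¹' (Set.Iic (conB Q S A i)) := by
      ext e
      simp [Set.mem_iInter, Set.mem_preimage, Set.mem_Iic]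
    rw [hrw]
    exact isClosed_iInter fun i =>
      (isClosed_Iic.preimage (conL Q S A α i).continuous_of_finiteDimensional)
  · intro e he
    constructor
    · intro k
      have := he (.inl k)
      simp only [conL, conB, LinearMap.neg_apply, LinearMap.proj_apply] at this
      linarith
    · have h1 := he (.inr (.inr (.inl true)))
      have h2 := he (.inr (.inr (.inl false)))
      norm_num [conL, conB, coefL_apply] at h1 h2
      linarith


/-- The optimal delay-power tradeoff function `V` is piecewise linear
on its domain: it is the pointwise maximum of finitely many affine functions. -/
theorem tradeoff_piecewise_linear
    (Q S A : ℕ) (α : ℝ) (P : ℕ → ℝ)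
    (hA : 1 ≤ A) (hAS : A ≤ S) (hSQ : S ≤ Q)
    (hα0 : 0 < α) (hα1 : α < 1)
    (hP : ∀ s ≤ S, 0 ≤ P s)
    (V : ℝ → ℝ)
    (hV : ∀ p, V p = sInf {d : ℝ | ∃ x, IsLP Q S A α x ∧
        powerLP Q S P x ≤ p ∧ d = delayLP Q S A α x})
    (Dom : Set ℝ)
    (hDom : Dom = {p : ℝ | ∃ x, IsLP Q S A α x ∧ powerLP Q S P x ≤ p}) :
    ∃ (F : Finset (ℝ × ℝ)) (hF : F.Nonempty),
      ∀ p ∈ Dom, V p = F.sup' hF (fun ab => ab.1 * p + ab.2) := by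
  classical
  haveI : Nonempty (ConIdx Q S) := ⟨.inr (.inr (.inl true))⟩
  obtain ⟨W, hWsub, hKW⟩ := polytope_eq_convexHull_finset (conL Q S A α) (conB Q S A)
    (K_compact Q S A α)
  set K : Set (QSIdx Q S → ℝ) := {e | ∀ i, conL Q S A α i e ≤ conB Q S A i} with hKdef
  set fL : (QSIdx Q S → ℝ) →ₗ[ℝ] ℝ × ℝ :=
    LinearMap.prod (coefL Q S fun k => P k.2)
      ((1 / ((A : ℝ) * α)) • coefL Q S fun k => (k.1 : ℝ)) with hfL
  have hfLpow : ∀ e, (fL e).1 = powerLP Q S P (toX Q S e) := by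
    intro e
    rw [powerLP_toX]
    simp [hfL, LinearMap.prod_apply, coefL_apply]
  have hfLdel : ∀ e, (fL e).2 = delayLP Q S A α (toX Q S e) := by
    intro e
    rw [delayLP_toX]
    simp [hfL, LinearMap.prod_apply, coefL_apply, LinearMap.smul_apply, smul_eq_mul]
  have hKne : (eOf Q S (xhat A α)) ∈ K :=
    (mem_K_iff Q S A α _).2 (isLP_transfer Q S A α _ (isLP_xhat Q S A α hA hAS hSQ hα0 hα1))
  have hWne : W.Nonempty := by
    rcases W.eq_empty_or_nonempty with h | h
    · exfalso
      rw [h] at hKW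
      simp only [Finset.coe_empty, convexHull_empty] at hKW
      rw [hKW] at hKne
      exact hKne
    · exact h
  set W2 : Finset (ℝ × ℝ) := W.image (fun e => fL e) with hW2
  have hW2ne : W2.Nonempty := hWne.image _
  have hhull : convexHull ℝ (W2 : Set (ℝ × ℝ)) = fL '' K := by
    calc convexHull ℝ (W2 : Set (ℝ × ℝ)) = convexHull ℝ (fL '' (W : Set (QSIdx Q S → ℝ))) := by
          rw [hW2, Finset.coe_image]
      _ = fL '' (convexHull ℝ (W : Set (QSIdx Q S → ℝ))) := (fL.image_convexHull _).symm
      _ = fL '' K := by rw [← hKW]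
  have hset : ∀ p : ℝ,
      {d : ℝ | ∃ x, IsLP Q S A α x ∧ powerLP Q S P x ≤ p ∧ d = delayLP Q S A α x}
      = {d : ℝ | ∃ t ∈ convexHull ℝ (W2 : Set (ℝ × ℝ)), t.1 ≤ p ∧ d = t.2} := by
    intro p
    ext d
    simp only [Set.mem_setOf_eq]
    constructor
    · rintro ⟨x, hx, hpow, rfl⟩
      refine ⟨fL (eOf Q S x), ?_, ?_, ?_⟩
      · rw [hhull]
        exact Set.mem_image_of_mem _ ((mem_K_iff Q S A α _).2 (isLP_transfer Q S A α x hx))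
      · rw [hfLpow, powerLP_transfer]
        exact hpow
      · rw [hfLdel, delayLP_transfer]
    · rintro ⟨t, ht, htp, rfl⟩
      rw [hhull] at ht
      obtain ⟨e, heK, rfl⟩ := ht
      refine ⟨toX Q S e, (mem_K_iff Q S A α e).1 heK, ?_, hfLdel e⟩
      rw [← hfLpow]
      exact htp
  obtain ⟨F, hF, hmain⟩ := lower_env W2 hW2ne
  refine ⟨F, hF, ?_⟩
  intro p hpDom
  rw [hV p, hset p]
  apply hmain
  rw [hDom] at hpDom
  obtain ⟨x, hx, hpow⟩ := hpDom
  refine ⟨fL (eOf Q S x), ?_, ?_⟩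
  · rw [hhull]
    exact Set.mem_image_of_mem _ ((mem_K_iff Q S A α _).2 (isLP_transfer Q S A α x hx))
  · rw [hfLpow, powerLP_transfer]
    exact hpow
end

section
/- Fix a real Pth and suppose x* is an LP point with P̄(x*) ≤ Pth that minimizes D over all LP points x with P̄(x) ≤ Pth. Define π*_q = Σ_{s=0}^{S} x*_{q,s} and the policy f* by f*_{q,s} = x*_{q,s}/π*_q if π*_q > 0 and f*_{q,s} = 1{s = s_q^max} if π*_q = 0, and let M be the (Q+1)×(Q+1) transition matrix with entries M_{i,j} = λ*_{i,j} = Σ_{s=0}^{S} f*_{i,s}·( α·1{i−s+A = j} + (1−α)·1{i−s = j} ). Write i ⇝ j iff there exists n ≥ 0 with (M^n)_{i,j} > 0, and call a state i ∈ {0,…,Q} recurrent iff for every j, i ⇝ j implies j ⇝ i. Then the Markov chain with transition matrix M has exactly one recurrent closed class: the set of recurrent states is nonempty, and any two recurrent states i, j satisfy i ⇝ j. -/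
open Finset

lemma matpow_nonneg {n : ℕ} (M : Matrix (Fin n) (Fin n) ℝ) (h : ∀ i j, 0 ≤ M i j) (k : ℕ) :
    ∀ i j, 0 ≤ (M ^ k) i j := by
  induction k with
  | zero => intro i j; rw [pow_zero, Matrix.one_apply]; split <;> norm_num
  | succ k ih =>
      intro i j
      rw [pow_succ, Matrix.mul_apply]
      exact Finset.sum_nonneg fun l _ => mul_nonneg (ih i l) (h l j)

lemma reach_refl {n : ℕ} (M : Matrix (Fin n) (Fin n) ℝ) (i : Fin n) :
    ∃ a, 0 < (M ^ a) i i := ⟨0, by rw [pow_zero, Matrix.one_apply_eq]; norm_num⟩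

lemma reach_trans {n : ℕ} (M : Matrix (Fin n) (Fin n) ℝ) (h : ∀ i j, 0 ≤ M i j)
    {i j k : Fin n} (h1 : ∃ a, 0 < (M ^ a) i j) (h2 : ∃ b, 0 < (M ^ b) j k) :
    ∃ c, 0 < (M ^ c) i k := by
  obtain ⟨a, ha⟩ := h1
  obtain ⟨b, hb⟩ := h2
  refine ⟨a + b, ?_⟩
  rw [pow_add, Matrix.mul_apply]
  calc (0:ℝ) < (M ^ a) i j * (M ^ b) j k := mul_pos ha hb
    _ ≤ _ := Finset.single_le_sum
        (fun l _ => mul_nonneg (matpow_nonneg M h a i l) (matpow_nonneg M h b l k))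
        (mem_univ j)

lemma exists_pos_term {β : Type*} {s : Finset β} {f : β → ℝ}
    (h : ∀ b ∈ s, 0 ≤ f b) (hs : 0 < ∑ b ∈ s, f b) : ∃ b ∈ s, 0 < f b := by
  by_contra hc
  push_neg at hc
  have : ∑ b ∈ s, f b ≤ 0 := Finset.sum_nonpos fun b hb => hc b hb
  linarith

lemma pos_of_mul {a b : ℝ} (ha : 0 ≤ a) (hb : 0 ≤ b) (h : 0 < a * b) : 0 < a ∧ 0 < b := by
  constructor
  · rcases ha.lt_or_eq with h' | h'
    · exact h'
    · exfalso; rw [← h', zero_mul] at h; exact lt_irrefl 0 h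
  · rcases hb.lt_or_eq with h' | h'
    · exact h'
    · exfalso; rw [← h', mul_zero] at h; exact lt_irrefl 0 h

lemma exists_recurrent {n : ℕ} (hn : 0 < n) (M : Matrix (Fin n) (Fin n) ℝ)
    (h : ∀ i j, 0 ≤ M i j) :
    ∃ i, ∀ j, (∃ a, 0 < (M ^ a) i j) → ∃ b, 0 < (M ^ b) j i := by
  classical
  have hne : (Finset.univ : Finset (Fin n)).Nonempty := ⟨⟨0, hn⟩, mem_univ _⟩
  obtain ⟨i, -, hi⟩ := Finset.exists_min_image univ
    (fun k => (univ.filter (fun j => ∃ a, 0 < (M ^ a) k j)).card) hne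
  refine ⟨i, fun j hij => ?_⟩
  by_contra hji
  have hsub : (univ.filter (fun l => ∃ a, 0 < (M ^ a) j l)) ⊂
      (univ.filter (fun l => ∃ a, 0 < (M ^ a) i l)) := by
    constructor
    · intro l hl
      rw [mem_filter] at hl ⊢
      exact ⟨mem_univ _, reach_trans M h hij hl.2⟩
    · intro hsup
      have : i ∈ univ.filter (fun l => ∃ a, 0 < (M ^ a) j l) :=
        hsup (by rw [mem_filter]; exact ⟨mem_univ _, reach_refl M i⟩)
      rw [mem_filter] at this
      exact hji this.2
  have := Finset.card_lt_card hsub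
  have := hi j (mem_univ j)
  omega

lemma shift_sum (g : ℕ → ℝ) (mv Q : ℕ) (hg : ∀ k, g k ≠ 0 → mv ≤ k ∧ k ≤ Q) :
    ∑ q ∈ range (Q + 1), g (q + mv) = ∑ k ∈ range (Q + 1), g k := by
  have h1 : ∑ q ∈ range (Q + 1), g (q + mv) = ∑ k ∈ Finset.Ico mv (Q + 1 + mv), g k := by
    rw [Finset.sum_Ico_eq_sum_range]
    have : Q + 1 + mv - mv = Q + 1 := by omega
    rw [this]
    exact Finset.sum_congr rfl fun q _ => by rw [Nat.add_comm]
  have h2 : ∑ k ∈ Finset.Ico 0 (Q + 1 + mv), g k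
      = ∑ k ∈ Finset.Ico 0 mv, g k + ∑ k ∈ Finset.Ico mv (Q + 1 + mv), g k :=
    (Finset.sum_Ico_consecutive g (by omega) (by omega)).symm
  have h3 : ∑ k ∈ Finset.Ico 0 (Q + 1 + mv), g k
      = ∑ k ∈ Finset.Ico 0 (Q + 1), g k + ∑ k ∈ Finset.Ico (Q + 1) (Q + 1 + mv), g k :=
    (Finset.sum_Ico_consecutive g (by omega) (by omega)).symm
  have z1 : ∑ k ∈ Finset.Ico 0 mv, g k = 0 :=
    Finset.sum_eq_zero fun k hk => by
      by_contra hne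
      have := hg k hne
      rw [Finset.mem_Ico] at hk
      omega
  have z2 : ∑ k ∈ Finset.Ico (Q + 1) (Q + 1 + mv), g k = 0 :=
    Finset.sum_eq_zero fun k hk => by
      by_contra hne
      have := hg k hne
      rw [Finset.mem_Ico] at hk
      omega
  rw [h1, ← Nat.Ico_zero_eq_range]
  linarith

/-- The queue-length Markov chain of the optimal variable-length coding
policy (derived from a delay-optimal LP point under power budget `Pth`) has exactly one
recurrent closed class: recurrent states exist, and any two recurrent states communicate.
Here `i ⇝ j` iff `(M^n) i j > 0` for some `n ≥ 0`, and `i` is recurrent iff every state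
it reaches, reaches it back. -/
theorem optimal_policy_unique_recurrent_class
    (Q S A : ℕ) (α : ℝ) (P : ℕ → ℝ)
    (hA : 1 ≤ A) (hAS : A ≤ S) (hSQ : S ≤ Q)
    (hα0 : 0 < α) (hα1 : α < 1)
    (hP : ∀ s ≤ S, 0 ≤ P s)
    (Pth : ℝ)
    (x : ℕ → ℕ → ℝ) (hx : IsLP Q S A α x)
    (hxP : powerLP Q S P x ≤ Pth)
    (hxOpt : ∀ y, IsLP Q S A α y → powerLP Q S P y ≤ Pth →
      delayLP Q S A α x ≤ delayLP Q S A α y)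
    (pi : ℕ → ℝ) (hpi : ∀ q, pi q = ∑ s ∈ range (S + 1), x q s)
    (f : ℕ → ℕ → ℝ)
    (hf : ∀ q s, f q s =
      if 0 < pi q then x q s / pi q else if s = sHi S q then 1 else 0)
    (M : Matrix (Fin (Q + 1)) (Fin (Q + 1)) ℝ)
    (hM : ∀ i j : Fin (Q + 1), M i j = lam S A α f (i : ℕ) (j : ℕ)) :
    (∃ i : Fin (Q + 1),
      ∀ j : Fin (Q + 1), (∃ n : ℕ, 0 < (M ^ n) i j) → (∃ n : ℕ, 0 < (M ^ n) j i)) ∧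
    (∀ i j : Fin (Q + 1),
      (∀ j' : Fin (Q + 1), (∃ n : ℕ, 0 < (M ^ n) i j') → (∃ n : ℕ, 0 < (M ^ n) j' i)) →
      (∀ i' : Fin (Q + 1), (∃ n : ℕ, 0 < (M ^ n) j i') → (∃ n : ℕ, 0 < (M ^ n) i' j)) →
      ∃ n : ℕ, 0 < (M ^ n) i j) := by
  classical
  obtain ⟨hx0, hxz, hxsum, hxbal⟩ := hx
  have h1α : (0:ℝ) < 1 - α := by linarith
  -- basic facts on pi, f
  have hpi0 : ∀ q ≤ Q, 0 ≤ pi q := by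
    intro q hq
    rw [hpi]
    exact Finset.sum_nonneg fun s hs => hx0 q hq s (by simpa using Nat.lt_succ_iff.mp (mem_range.mp hs))
  have hxle : ∀ q ≤ Q, ∀ s ≤ S, x q s ≤ pi q := by
    intro q hq s hs
    rw [hpi]
    exact Finset.single_le_sum
      (fun t ht => hx0 q hq t (Nat.lt_succ_iff.mp (mem_range.mp ht)))
      (mem_range.mpr (Nat.lt_succ_of_le hs))
  have hxpi : ∀ q ≤ Q, ∀ s ≤ S, x q s = f q s * pi q := by
    intro q hq s hs
    rw [hf]
    by_cases hq0 : 0 < pi q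
    · rw [if_pos hq0, div_mul_cancel₀ _ (ne_of_gt hq0)]
    · rw [if_neg hq0]
      have hpe : pi q = 0 := le_antisymm (not_lt.mp hq0) (hpi0 q hq)
      have : x q s = 0 := le_antisymm (hpe ▸ hxle q hq s hs) (hx0 q hq s hs)
      rw [this, hpe, mul_zero]
  have hf0 : ∀ q ≤ Q, ∀ s ≤ S, 0 ≤ f q s := by
    intro q hq s hs
    rw [hf]
    by_cases hq0 : 0 < pi q
    · rw [if_pos hq0]; exact div_nonneg (hx0 q hq s hs) (le_of_lt hq0)
    · rw [if_neg hq0]; split <;> norm_num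
  have hfz : ∀ q ≤ Q, ∀ s ≤ S, (s < sLo Q A q ∨ sHi S q < s) → f q s = 0 := by
    intro q hq s hs hout
    rw [hf]
    by_cases hq0 : 0 < pi q
    · rw [if_pos hq0, hxz q hq s hs hout, zero_div]
    · rw [if_neg hq0, if_neg]
      intro he
      subst he
      -- sHi is out of range: impossible since sLo q ≤ sHi q
      have h1 : sLo Q A q ≤ sHi S q := by
        simp only [sLo, sHi]
        omega
      simp only [sLo, sHi] at hout h1
      omega
  have hfsum : ∀ q ≤ Q, ∑ s ∈ range (S + 1), f q s = 1 := by
    intro q hq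
    by_cases hq0 : 0 < pi q
    · have : ∑ s ∈ range (S + 1), f q s = (∑ s ∈ range (S + 1), x q s) / pi q := by
        rw [Finset.sum_div]
        exact Finset.sum_congr rfl fun s hs => by
          rw [hf, if_pos hq0]
      rw [this, ← hpi, div_self (ne_of_gt hq0)]
    · have hHi : sHi S q ∈ range (S + 1) := mem_range.mpr (Nat.lt_succ_of_le (min_le_left _ _))
      rw [Finset.sum_eq_single (sHi S q)]
      · rw [hf, if_neg hq0, if_pos rfl]
      · intro t ht htne
        rw [hf, if_neg hq0, if_neg htne]
      · intro habs; exact absurd hHi habs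
  -- indicator facts
  have hindA0 : ∀ a i s j, (0:ℝ) ≤ indArr a i s j := by
    intro a i s j; unfold indArr; split <;> norm_num
  have hindN0 : ∀ i s j, (0:ℝ) ≤ indNoArr i s j := by
    intro i s j; unfold indNoArr; split <;> norm_num
  have hw0 : ∀ i s j, (0:ℝ) ≤ α * indArr A i s j + (1 - α) * indNoArr i s j := by
    intro i s j
    have := hindA0 A i s j
    have := hindN0 i s j
    nlinarith
  have hlam0 : ∀ i ≤ Q, ∀ j, 0 ≤ lam S A α f i j := by
    intro i hi j
    unfold lam
    exact Finset.sum_nonneg fun s hs =>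
      mul_nonneg (hf0 i hi s (Nat.lt_succ_iff.mp (mem_range.mp hs))) (hw0 i s j)
  have hM0 : ∀ i j : Fin (Q + 1), 0 ≤ M i j := by
    intro i j; rw [hM]; exact hlam0 i (Nat.lt_succ_iff.mp i.isLt) j
  have hfsupp : ∀ q ≤ Q, ∀ s ≤ S, f q s ≠ 0 → sLo Q A q ≤ s ∧ s ≤ sHi S q := by
    intro q hq s hs hne
    by_contra hcon
    exact hne (hfz q hq s hs (by simp only [sLo, sHi] at hcon ⊢; omega))
  have hxsupp : ∀ q ≤ Q, ∀ s ≤ S, x q s ≠ 0 → sLo Q A q ≤ s ∧ s ≤ sHi S q := by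
    intro q hq s hs hne
    by_contra hcon
    exact hne (hxz q hq s hs (by simp only [sLo, sHi] at hcon ⊢; omega))
  have hAQ : A ≤ Q := hAS.trans hSQ
  have hlam_lb : ∀ i ≤ Q, ∀ s ≤ S, f i s ≠ 0 →
      s ≤ i ∧ i - s + A ≤ Q ∧
      0 < lam S A α f i (i - s) ∧ 0 < lam S A α f i (i - s + A) := by
    intro i hi s hs hne
    obtain ⟨hlo, hhi⟩ := hfsupp i hi s hs hne
    simp only [sLo, sHi] at hlo hhi
    have hsi : s ≤ i := le_trans hhi (min_le_right _ _)
    have hQ' : i - s + A ≤ Q := by omega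
    have hfpos : 0 < f i s := lt_of_le_of_ne (hf0 i hi s hs) (Ne.symm hne)
    have hN1 : indNoArr i s (i - s) = 1 := by unfold indNoArr; rw [if_pos (by omega)]
    have hA1 : indArr A i s (i - s + A) = 1 := by unfold indArr; rw [if_pos (by omega)]
    refine ⟨hsi, hQ', ?_, ?_⟩
    · have hwp : 0 < α * indArr A i s (i - s) + (1 - α) * indNoArr i s (i - s) := by
        rw [hN1]
        have := mul_nonneg hα0.le (hindA0 A i s (i - s))
        linarith
      calc (0:ℝ) < _ := mul_pos hfpos hwp
        _ ≤ lam S A α f i (i - s) := by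
            unfold lam
            exact Finset.single_le_sum
              (f := fun t => f i t * (α * indArr A i t (i - s) + (1 - α) * indNoArr i t (i - s)))
              (fun t ht => mul_nonneg (hf0 i hi t (Nat.lt_succ_iff.mp (mem_range.mp ht))) (hw0 i t _))
              (mem_range.mpr (Nat.lt_succ_of_le hs))
    · have hwp : 0 < α * indArr A i s (i - s + A) + (1 - α) * indNoArr i s (i - s + A) := by
        rw [hA1]
        have := mul_nonneg h1α.le (hindN0 i s (i - s + A))
        linarith
      calc (0:ℝ) < _ := mul_pos hfpos hwp
        _ ≤ lam S A α f i (i - s + A) := by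
            unfold lam
            exact Finset.single_le_sum
              (f := fun t => f i t * (α * indArr A i t (i - s + A) + (1 - α) * indNoArr i t (i - s + A)))
              (fun t ht => mul_nonneg (hf0 i hi t (Nat.lt_succ_iff.mp (mem_range.mp ht))) (hw0 i t _))
              (mem_range.mpr (Nat.lt_succ_of_le hs))
  have hstep : ∀ (k : Fin (Q + 1)) (j : ℕ) (hj : j ≤ Q), 0 < lam S A α f (k : ℕ) j →
      ∃ n, 0 < (M ^ n) k ⟨j, Nat.lt_succ_of_le hj⟩ := by
    intro k j hj hl
    exact ⟨1, by rw [pow_one, hM]; exact hl⟩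
  have hstat : ∀ j ≤ Q, pi j = ∑ i ∈ range (Q + 1), lam S A α f i j * pi i := by
    intro j hj
    have hb := hxbal j hj
    rw [hpi j, ← hb]
    apply Finset.sum_congr rfl
    intro i hi
    have hiQ : i ≤ Q := Nat.lt_succ_iff.mp (mem_range.mp hi)
    unfold lam
    rw [Finset.sum_mul]
    apply Finset.sum_congr rfl
    intro s hs
    rw [hxpi i hiQ s (Nat.lt_succ_iff.mp (mem_range.mp hs))]
    ring
  have hsupp : ∀ i ≤ Q, ∀ j ≤ Q, 0 < pi i → 0 < lam S A α f i j → 0 < pi j := by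
    intro i hi j hj hpii hl
    rw [hstat j hj]
    calc (0:ℝ) < lam S A α f i j * pi i := mul_pos hl hpii
      _ ≤ _ := Finset.single_le_sum
          (fun k hk => mul_nonneg (hlam0 k (Nat.lt_succ_iff.mp (mem_range.mp hk)) j)
            (hpi0 k (Nat.lt_succ_iff.mp (mem_range.mp hk))))
          (mem_range.mpr (Nat.lt_succ_of_le hi))
  have hindsum : ∀ (c : ℤ) (t : ℕ), c = (t : ℤ) → t ≤ Q →
      ∑ j ∈ range (Q + 1), (if c = (j : ℤ) then (1:ℝ) else 0) = 1 := by
    intro c t hc ht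
    rw [Finset.sum_eq_single t]
    · rw [if_pos (by omega)]
    · intro b _ hbne
      rw [if_neg (fun h => hbne (by omega))]
    · intro h; exact absurd (mem_range.mpr (Nat.lt_succ_of_le ht)) h
  have hrow : ∀ i ≤ Q, ∑ j ∈ range (Q + 1), lam S A α f i j = 1 := by
    intro i hi
    unfold lam
    rw [Finset.sum_comm]
    conv_rhs => rw [← hfsum i hi]
    apply Finset.sum_congr rfl
    intro s hs
    have hsS : s ≤ S := Nat.lt_succ_iff.mp (mem_range.mp hs)
    by_cases hfe : f i s = 0
    · simp [hfe]
    · obtain ⟨hlo, hhi⟩ := hfsupp i hi s hsS hfe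
      simp only [sLo, sHi] at hlo hhi
      have hsi : s ≤ i := le_trans hhi (min_le_right _ _)
      rw [← Finset.mul_sum]
      have e1 : ∑ j ∈ range (Q + 1), (α * indArr A i s j + (1 - α) * indNoArr i s j) = 1 := by
        rw [Finset.sum_add_distrib, ← Finset.mul_sum, ← Finset.mul_sum]
        unfold indArr indNoArr
        rw [hindsum ((i:ℤ) - s + A) (i - s + A) (by omega) (by omega),
            hindsum ((i:ℤ) - s) (i - s) (by omega) (by omega)]
        ring
      rw [e1, mul_one]
  have hrowF : ∀ k : Fin (Q + 1), ∑ l : Fin (Q + 1), M k l = 1 := by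
    intro k
    calc ∑ l : Fin (Q + 1), M k l = ∑ l : Fin (Q + 1), lam S A α f (k : ℕ) (l : ℕ) := by
          exact Finset.sum_congr rfl fun l _ => hM k l
      _ = ∑ j ∈ range (Q + 1), lam S A α f (k : ℕ) j :=
          Fin.sum_univ_eq_sum_range (fun j => lam S A α f (k : ℕ) j) (Q + 1)
      _ = 1 := hrow k (Nat.lt_succ_iff.mp k.isLt)
  have hstatF : ∀ l : Fin (Q + 1), pi (l : ℕ) = ∑ k : Fin (Q + 1), M k l * pi (k : ℕ) := by
    intro l
    calc pi (l : ℕ) = ∑ k ∈ range (Q + 1), lam S A α f k (l : ℕ) * pi k :=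
          hstat l (Nat.lt_succ_iff.mp l.isLt)
      _ = ∑ k : Fin (Q + 1), lam S A α f (k : ℕ) (l : ℕ) * pi (k : ℕ) :=
          (Fin.sum_univ_eq_sum_range (fun k => lam S A α f k (l : ℕ) * pi k) (Q + 1)).symm
      _ = ∑ k : Fin (Q + 1), M k l * pi (k : ℕ) :=
          Finset.sum_congr rfl fun k _ => by rw [hM]
  have hsuppF : ∀ k l : Fin (Q + 1), 0 < pi (k : ℕ) → 0 < M k l → 0 < pi (l : ℕ) := by
    intro k l hk hkl
    rw [hM] at hkl
    exact hsupp k (Nat.lt_succ_iff.mp k.isLt) l (Nat.lt_succ_iff.mp l.isLt) hk hkl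
  have hrecsupp : ∀ i : Fin (Q + 1), 0 < pi (i : ℕ) →
      ∀ j : Fin (Q + 1), (∃ n, 0 < (M ^ n) i j) → ∃ n, 0 < (M ^ n) j i := by
    intro i hpii j hij
    by_contra hji
    have stepA : ∀ n (k j' : Fin (Q + 1)), 0 < (M ^ n) k j' → 0 < pi (k : ℕ) →
        (∃ a, 0 < (M ^ a) k i) → ¬(∃ b, 0 < (M ^ b) j' i) →
        ∃ u v : Fin (Q + 1), 0 < pi (u : ℕ) ∧ (∃ a, 0 < (M ^ a) u i) ∧
          ¬(∃ b, 0 < (M ^ b) v i) ∧ 0 < M u v := by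
      intro n
      induction n with
      | zero =>
          intro k j' h hk hki hj'
          rw [pow_zero, Matrix.one_apply] at h
          by_cases he : k = j'
          · exact absurd (he ▸ hki) hj'
          · rw [if_neg he] at h; exact absurd h (lt_irrefl 0)
      | succ n ih =>
          intro k j' h hk hki hj'
          rw [pow_succ', Matrix.mul_apply] at h
          obtain ⟨l, -, hl⟩ := exists_pos_term
            (fun l _ => mul_nonneg (hM0 k l) (matpow_nonneg M hM0 n l j')) h
          obtain ⟨h1, h2⟩ := pos_of_mul (hM0 k l) (matpow_nonneg M hM0 n l j') hl
          have hpl : 0 < pi (l : ℕ) := hsuppF k l hk h1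
          by_cases hli : ∃ a, 0 < (M ^ a) l i
          · exact ih l j' h2 hpl hli hj'
          · exact ⟨k, l, hk, hki, hli, h1⟩
    obtain ⟨nij, hnij⟩ := hij
    obtain ⟨u, v, hu1, hu2, hv, huv⟩ := stepA nij i j hnij hpii (reach_refl M i) hji
    have hVclosed : ∀ k' ∈ univ.filter (fun l : Fin (Q + 1) => ¬ ∃ b, 0 < (M ^ b) l i),
        ∀ l, l ∉ univ.filter (fun l : Fin (Q + 1) => ¬ ∃ b, 0 < (M ^ b) l i) → M k' l = 0 := by
      intro k' hk' l hl
      by_contra hne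
      have hpos : 0 < M k' l := lt_of_le_of_ne (hM0 k' l) (Ne.symm hne)
      have hlr : ∃ b, 0 < (M ^ b) l i := by
        by_contra hc
        exact hl (mem_filter.mpr ⟨mem_univ l, hc⟩)
      exact (mem_filter.mp hk').2 (reach_trans M hM0 ⟨1, by rw [pow_one]; exact hpos⟩ hlr)
    set V : Finset (Fin (Q + 1)) := univ.filter (fun l : Fin (Q + 1) => ¬ ∃ b, 0 < (M ^ b) l i)
      with hVdef
    have e1 : ∑ l ∈ V, pi (l : ℕ) = ∑ k' : Fin (Q + 1), pi (k' : ℕ) * ∑ l ∈ V, M k' l := by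
      calc ∑ l ∈ V, pi (l : ℕ) = ∑ l ∈ V, ∑ k' : Fin (Q + 1), M k' l * pi (k' : ℕ) :=
            Finset.sum_congr rfl fun l _ => hstatF l
        _ = ∑ k' : Fin (Q + 1), ∑ l ∈ V, M k' l * pi (k' : ℕ) := Finset.sum_comm
        _ = _ := Finset.sum_congr rfl fun k' _ => by rw [← Finset.sum_mul, mul_comm]
    have e2 : ∀ k' ∈ V, ∑ l ∈ V, M k' l = 1 := by
      intro k' hk'
      rw [← hrowF k']
      exact Finset.sum_subset (Finset.subset_univ V) (fun l _ hl => hVclosed k' hk' l hl)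
    have e3 : ∑ k' : Fin (Q + 1), pi (k' : ℕ) * ∑ l ∈ V, M k' l
        = ∑ k' ∈ V, (pi (k' : ℕ) * ∑ l ∈ V, M k' l)
          + ∑ k' ∈ univ.filter (fun l : Fin (Q + 1) => ¬ ¬ ∃ b, 0 < (M ^ b) l i),
              (pi (k' : ℕ) * ∑ l ∈ V, M k' l) := by
      rw [hVdef]
      exact (Finset.sum_filter_add_sum_filter_not univ _ _).symm
    have e4 : ∑ k' ∈ V, (pi (k' : ℕ) * ∑ l ∈ V, M k' l) = ∑ k' ∈ V, pi (k' : ℕ) :=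
      Finset.sum_congr rfl fun k' hk' => by rw [e2 k' hk', mul_one]
    have e5 : ∑ k' ∈ univ.filter (fun l : Fin (Q + 1) => ¬ ¬ ∃ b, 0 < (M ^ b) l i),
        (pi (k' : ℕ) * ∑ l ∈ V, M k' l) = 0 := by linarith
    have hnn : ∀ k' ∈ univ.filter (fun l : Fin (Q + 1) => ¬ ¬ ∃ b, 0 < (M ^ b) l i),
        0 ≤ pi (k' : ℕ) * ∑ l ∈ V, M k' l := fun k' _ =>
      mul_nonneg (hpi0 k' (Nat.lt_succ_iff.mp k'.isLt))
        (Finset.sum_nonneg fun l _ => hM0 k' l)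
    have humem : u ∈ univ.filter (fun l : Fin (Q + 1) => ¬ ¬ ∃ b, 0 < (M ^ b) l i) :=
      mem_filter.mpr ⟨mem_univ u, not_not.mpr hu2⟩
    have hterm0 : pi (u : ℕ) * ∑ l ∈ V, M u l = 0 :=
      (Finset.sum_eq_zero_iff_of_nonneg hnn).mp e5 u humem
    have hsum0 : ∑ l ∈ V, M u l = 0 :=
      (mul_eq_zero.mp hterm0).resolve_left (ne_of_gt hu1)
    have hMuv : M u v = 0 :=
      (Finset.sum_eq_zero_iff_of_nonneg (fun l _ => hM0 u l)).mp hsum0 v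
        (mem_filter.mpr ⟨mem_univ v, hv⟩)
    exact absurd hMuv (ne_of_gt huv)
  have key : ∀ i : Fin (Q + 1),
      (∀ j, (∃ n, 0 < (M ^ n) i j) → (∃ n, 0 < (M ^ n) j i)) →
      ∃ n, 0 < (M ^ n) i ⟨0, Nat.succ_pos Q⟩ := by
    intro i hrec
    obtain ⟨m, hmRS, hmmin⟩ := Finset.exists_min_image
      (univ.filter (fun j : Fin (Q + 1) => ∃ n, 0 < (M ^ n) i j)) (fun k => (k : ℕ))
      ⟨i, mem_filter.mpr ⟨mem_univ i, reach_refl M i⟩⟩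
    have him : ∃ n, 0 < (M ^ n) i m := (mem_filter.mp hmRS).2
    have hminle : ∀ j : Fin (Q + 1), (∃ n, 0 < (M ^ n) i j) → (m : ℕ) ≤ (j : ℕ) :=
      fun j hj => hmmin j (mem_filter.mpr ⟨mem_univ j, hj⟩)
    have hmQ : (m : ℕ) ≤ Q := Nat.lt_succ_iff.mp m.isLt
    have hc1 : ∀ s ≤ S, f (m : ℕ) s ≠ 0 → s = 0 := by
      intro s hs hne
      obtain ⟨hsi, hQ', hl1, hl2⟩ := hlam_lb m hmQ s hs hne
      have hreach : ∃ n, 0 < (M ^ n) i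
          ⟨(m : ℕ) - s, Nat.lt_succ_of_le (le_trans (Nat.sub_le _ _) hmQ)⟩ :=
        reach_trans M hM0 him (hstep m ((m : ℕ) - s) (le_trans (Nat.sub_le _ _) hmQ) hl1)
      have h' : (m : ℕ) ≤ (m : ℕ) - s := hminle _ hreach
      omega
    have hm0 : (m : ℕ) = 0 := by
      by_cases hpm : 0 < pi (m : ℕ)
      · by_contra hm0
        -- C is the set of states reachable from m (all ≥ m, ≤ Q)
        set C : ℕ → Prop := fun k => ∃ hk : k ≤ Q, ∃ n, 0 < (M ^ n) m ⟨k, Nat.lt_succ_of_le hk⟩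
          with hCdef
        have hCle : ∀ k, C k → (m : ℕ) ≤ k ∧ k ≤ Q := by
          intro k hk
          obtain ⟨hkQ, hr⟩ := hk
          exact ⟨hminle _ (reach_trans M hM0 him hr), hkQ⟩
        have hCm : C (m : ℕ) := ⟨hmQ, reach_refl M m⟩
        have hxpos_pi : ∀ k ≤ Q, ∀ s ≤ S, x k s ≠ 0 → 0 < pi k := by
          intro k hk s hs hne
          exact lt_of_lt_of_le (lt_of_le_of_ne (hx0 k hk s hs) (Ne.symm hne)) (hxle k hk s hs)
        have hfCpos : ∀ k ≤ Q, ∀ s ≤ S, x k s ≠ 0 → f k s ≠ 0 := by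
          intro k hk s hs hne
          rw [hf, if_pos (hxpos_pi k hk s hs hne)]
          exact div_ne_zero hne (ne_of_gt (hxpos_pi k hk s hs hne))
        have hCclose : ∀ k s, C k → s ≤ S → x k s ≠ 0 → C (k - s) ∧ C (k - s + A) := by
          intro k s hCk hs hne
          obtain ⟨hkQ, hr⟩ := hCk
          have hfne := hfCpos k hkQ s hs hne
          obtain ⟨hsk, hQ', hl1, hl2⟩ := hlam_lb k hkQ s hs hfne
          constructor
          · exact ⟨le_trans (Nat.sub_le _ _) hkQ,
              reach_trans M hM0 hr
                (hstep ⟨k, Nat.lt_succ_of_le hkQ⟩ (k - s) (le_trans (Nat.sub_le _ _) hkQ) hl1)⟩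
          · exact ⟨hQ', reach_trans M hM0 hr
              (hstep ⟨k, Nat.lt_succ_of_le hkQ⟩ (k - s + A) hQ' hl2)⟩
        have hCout : ∀ k, k ≤ Q → ¬ C k → ∀ s ≤ S, x k s ≠ 0 →
            ¬ C (k - s) ∧ ¬ C (k - s + A) := by
          intro k hk hCk s hs hne
          have hpik := hxpos_pi k hk s hs hne
          have hfne := hfCpos k hk s hs hne
          obtain ⟨hsk, hQ', hl1, hl2⟩ := hlam_lb k hk s hs hfne
          constructor
          · intro hC'
            obtain ⟨hjQ, hr⟩ := hC'
            have hks : ∃ n, 0 < (M ^ n) (⟨k, Nat.lt_succ_of_le hk⟩ : Fin (Q + 1))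
                ⟨k - s, Nat.lt_succ_of_le hjQ⟩ :=
              hstep ⟨k, Nat.lt_succ_of_le hk⟩ (k - s) hjQ hl1
            have hback := hrecsupp ⟨k, Nat.lt_succ_of_le hk⟩ hpik _ hks
            exact hCk ⟨hk, reach_trans M hM0 hr hback⟩
          · intro hC'
            obtain ⟨hjQ, hr⟩ := hC'
            have hks : ∃ n, 0 < (M ^ n) (⟨k, Nat.lt_succ_of_le hk⟩ : Fin (Q + 1))
                ⟨k - s + A, Nat.lt_succ_of_le hjQ⟩ :=
              hstep ⟨k, Nat.lt_succ_of_le hk⟩ (k - s + A) hjQ hl2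
            have hback := hrecsupp ⟨k, Nat.lt_succ_of_le hk⟩ hpik _ hks
            exact hCk ⟨hk, reach_trans M hM0 hr hback⟩
        obtain ⟨w, hw⟩ : ∃ w : ℕ → ℕ → ℕ → ℝ, ∀ a b c,
            w a b c = α * indArr A a b c + (1 - α) * indNoArr a b c := ⟨_, fun _ _ _ => rfl⟩
        have hwnn : ∀ a b c, 0 ≤ w a b c := fun a b c => (hw a b c) ▸ hw0 a b c
        have hwdest : ∀ a b c, b ≤ a → w a b c ≠ 0 → c = a - b ∨ c = a - b + A := by
          intro a b c hba hne
          rw [hw] at hne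
          by_cases h1 : (a : ℤ) - b + A = c
          · right; omega
          · by_cases h2 : (a : ℤ) - b = c
            · left; omega
            · exfalso; apply hne; unfold indArr indNoArr; rw [if_neg h1, if_neg h2]; ring
        have hwtrans : ∀ a b c t, w (a + t) b (c + t) = w a b c := by
          intro a b c t
          rw [hw, hw]
          unfold indArr indNoArr
          have e1 : (((a + t : ℕ)) : ℤ) - b + A = ((c + t : ℕ) : ℤ) ↔ (a : ℤ) - b + A = c := by
            push_cast; omega
          have e2 : (((a + t : ℕ)) : ℤ) - b = ((c + t : ℕ) : ℤ) ↔ (a : ℤ) - b = c := by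
            push_cast; omega
          rw [if_congr e1 rfl rfl, if_congr e2 rfl rfl]
        have hiff : ∀ k, k ≤ Q → ∀ s ≤ S, x k s ≠ 0 → ∀ c, w k s c ≠ 0 → (C k ↔ C c) := by
          intro k hk s hs hxne c hwne
          obtain ⟨hlo2, hhi2⟩ := hxsupp k hk s hs hxne
          simp only [sLo, sHi] at hlo2 hhi2
          have hsk : s ≤ k := le_trans hhi2 (min_le_right _ _)
          rcases hwdest k s c hsk hwne with hc | hc
          · subst hc
            constructor
            · intro h; exact (hCclose k s h hs hxne).1
            · intro h; by_contra hnk; exact (hCout k hk hnk s hs hxne).1 h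
          · subst hc
            constructor
            · intro h; exact (hCclose k s h hs hxne).2
            · intro h; by_contra hnk; exact (hCout k hk hnk s hs hxne).2 h
        have hxbal2 : ∀ j, j ≤ Q →
            ∑ q ∈ range (Q + 1), ∑ s ∈ range (S + 1), x q s * w q s j = pi j := by
          intro j hj
          rw [hpi j, ← hxbal j hj]
          exact Finset.sum_congr rfl fun q _ => Finset.sum_congr rfl fun s _ => by rw [hw]
        have hAin : ∀ c,
            ∑ q ∈ range (Q + 1), ∑ s ∈ range (S + 1), (if C q then x q s * w q s c else 0)
            = (if C c then pi c else 0) := by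
          intro c
          by_cases hc : C c
          · rw [if_pos hc, ← hxbal2 c (hCle c hc).2]
            apply Finset.sum_congr rfl
            intro q hq
            apply Finset.sum_congr rfl
            intro s hs
            have hqQ : q ≤ Q := Nat.lt_succ_iff.mp (mem_range.mp hq)
            have hsS : s ≤ S := Nat.lt_succ_iff.mp (mem_range.mp hs)
            by_cases hCq : C q
            · rw [if_pos hCq]
            · rw [if_neg hCq]
              by_cases hxe : x q s = 0
              · rw [hxe, zero_mul]
              · by_cases hwe : w q s c = 0
                · rw [hwe, mul_zero]
                · exact absurd ((hiff q hqQ s hsS hxe c hwe).mpr hc) hCq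
          · rw [if_neg hc]
            apply Finset.sum_eq_zero
            intro q hq
            apply Finset.sum_eq_zero
            intro s hs
            have hqQ : q ≤ Q := Nat.lt_succ_iff.mp (mem_range.mp hq)
            have hsS : s ≤ S := Nat.lt_succ_iff.mp (mem_range.mp hs)
            by_cases hCq : C q
            · rw [if_pos hCq]
              by_cases hxe : x q s = 0
              · rw [hxe, zero_mul]
              · by_cases hwe : w q s c = 0
                · rw [hwe, mul_zero]
                · exact absurd ((hiff q hqQ s hsS hxe c hwe).mp hCq) hc
            · rw [if_neg hCq]
        have hifC : ∀ (g : ℕ → ℝ) (k : ℕ), (if C k then g k else 0) ≠ 0 → C k := by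
          intro g k hk
          by_cases h : C k
          · exact h
          · rw [if_neg h] at hk; exact absurd rfl hk
        obtain ⟨y, hy⟩ : ∃ y : ℕ → ℕ → ℝ, ∀ q s,
            y q s = (if C q then 0 else x q s)
              + (if C (q + (m : ℕ)) then x (q + (m : ℕ)) s else 0) := ⟨_, fun _ _ => rfl⟩
        have hshiftC : ∀ g : ℕ → ℝ, (∀ k, g k ≠ 0 → C k) →
            ∑ q ∈ range (Q + 1), g (q + (m : ℕ)) = ∑ k ∈ range (Q + 1), g k := by
          intro g hg
          exact shift_sum g (m : ℕ) Q (fun k hk => hCle k (hg k hk))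
        -- nonnegativity
        have hy0 : ∀ q ≤ Q, ∀ s ≤ S, 0 ≤ y q s := by
          intro q hq s hs
          rw [hy]
          have h1 : 0 ≤ (if C q then 0 else x q s) := by
            by_cases h : C q
            · rw [if_pos h]
            · rw [if_neg h]; exact hx0 q hq s hs
          have h2 : 0 ≤ (if C (q + (m : ℕ)) then x (q + (m : ℕ)) s else 0) := by
            by_cases h : C (q + (m : ℕ))
            · rw [if_pos h]; exact hx0 _ (hCle _ h).2 s hs
            · rw [if_neg h]
          linarith
        -- zero pattern
        have hyz : ∀ q ≤ Q, ∀ s ≤ S, (s < sLo Q A q ∨ sHi S q < s) → y q s = 0 := by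
          intro q hq s hs hout
          rw [hy]
          have h1 : (if C q then (0:ℝ) else x q s) = 0 := by
            by_cases h : C q
            · rw [if_pos h]
            · rw [if_neg h]; exact hxz q hq s hs hout
          have h2 : (if C (q + (m : ℕ)) then x (q + (m : ℕ)) s else 0) = 0 := by
            by_cases h : C (q + (m : ℕ))
            · rw [if_pos h]
              by_contra hne
              have hkQ := (hCle _ h).2
              obtain ⟨hlo2, hhi2⟩ := hxsupp _ hkQ s hs hne
              have hcl := (hCclose _ s h hs hne).1
              have hge := (hCle _ hcl).1
              simp only [sLo, sHi] at hlo2 hhi2 hout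
              omega
            · rw [if_neg h]
          rw [h1, h2, add_zero]
        -- per-q sum
        have hpiS : ∑ q ∈ range (Q + 1), pi q = 1 := by
          rw [← hxsum]; exact Finset.sum_congr rfl fun q _ => hpi q
        have hysum_q : ∀ q, ∑ s ∈ range (S + 1), y q s
            = (if C q then 0 else pi q) + (if C (q + (m : ℕ)) then pi (q + (m : ℕ)) else 0) := by
          intro q
          rw [Finset.sum_congr rfl (fun s _ => hy q s), Finset.sum_add_distrib]
          have e1 : ∑ s ∈ range (S + 1), (if C q then (0:ℝ) else x q s)
              = (if C q then 0 else pi q) := by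
            by_cases h : C q
            · simp [h]
            · simp only [if_neg h]; exact (hpi q).symm
          have e2 : ∑ s ∈ range (S + 1), (if C (q + (m : ℕ)) then x (q + (m : ℕ)) s else 0)
              = (if C (q + (m : ℕ)) then pi (q + (m : ℕ)) else 0) := by
            by_cases h : C (q + (m : ℕ))
            · simp only [if_pos h]; exact (hpi _).symm
            · simp [h]
          rw [e1, e2]
        -- total sum
        have hysum : ∑ q ∈ range (Q + 1), ∑ s ∈ range (S + 1), y q s = 1 := by
          rw [Finset.sum_congr rfl (fun q _ => hysum_q q), Finset.sum_add_distrib]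
          have e2 : ∑ q ∈ range (Q + 1), (if C (q + (m : ℕ)) then pi (q + (m : ℕ)) else 0)
              = ∑ k ∈ range (Q + 1), (if C k then pi k else 0) :=
            hshiftC (fun k => if C k then pi k else 0)
              (fun k hk => hifC (fun k => pi k) k hk)
          rw [e2, ← Finset.sum_add_distrib, ← hpiS]
          exact Finset.sum_congr rfl fun q _ => by by_cases h : C q <;> simp [h]
        -- balance
        have hybal : ∀ j ≤ Q,
            ∑ q ∈ range (Q + 1), ∑ s ∈ range (S + 1),
              y q s * (α * indArr A q s j + (1 - α) * indNoArr q s j)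
            = ∑ s ∈ range (S + 1), y j s := by
          intro j hj
          have e0 : ∀ q s, y q s * (α * indArr A q s j + (1 - α) * indNoArr q s j)
              = (if C q then 0 else x q s * w q s j)
                + (if C (q + (m : ℕ))
                    then x (q + (m : ℕ)) s * w (q + (m : ℕ)) s (j + (m : ℕ)) else 0) := by
            intro q s
            rw [hy, ← hw, hwtrans]
            by_cases h1 : C q <;> by_cases h2 : C (q + (m : ℕ)) <;> simp [h1, h2] <;> ring
          rw [Finset.sum_congr rfl (fun q _ => Finset.sum_congr rfl (fun s _ => e0 q s))]
          rw [Finset.sum_congr rfl (fun q _ => Finset.sum_add_distrib), Finset.sum_add_distrib]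
          have eA : ∑ q ∈ range (Q + 1), ∑ s ∈ range (S + 1),
              (if C q then (0:ℝ) else x q s * w q s j)
              = pi j - (if C j then pi j else 0) := by
            have ecomb : ∑ q ∈ range (Q + 1), ∑ s ∈ range (S + 1),
                ((if C q then (0:ℝ) else x q s * w q s j) + (if C q then x q s * w q s j else 0))
                = pi j := by
              rw [← hxbal2 j hj]
              exact Finset.sum_congr rfl fun q _ => Finset.sum_congr rfl fun s _ => by
                by_cases h : C q <;> simp [h]
            rw [Finset.sum_congr rfl (fun q _ => Finset.sum_add_distrib),
              Finset.sum_add_distrib, hAin j] at ecomb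
            linarith
          have eB : ∑ q ∈ range (Q + 1), ∑ s ∈ range (S + 1),
              (if C (q + (m : ℕ))
                then x (q + (m : ℕ)) s * w (q + (m : ℕ)) s (j + (m : ℕ)) else 0)
              = (if C (j + (m : ℕ)) then pi (j + (m : ℕ)) else 0) := by
            rw [Finset.sum_comm]
            have eshift : ∀ s, ∑ q ∈ range (Q + 1),
                (if C (q + (m : ℕ))
                  then x (q + (m : ℕ)) s * w (q + (m : ℕ)) s (j + (m : ℕ)) else 0)
                = ∑ k ∈ range (Q + 1), (if C k then x k s * w k s (j + (m : ℕ)) else 0) := by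
              intro s
              exact hshiftC (fun k => if C k then x k s * w k s (j + (m : ℕ)) else 0)
                (fun k hk => hifC (fun k => x k s * w k s (j + (m : ℕ))) k hk)
            rw [Finset.sum_congr rfl (fun s _ => eshift s), Finset.sum_comm]
            exact hAin (j + (m : ℕ))
          rw [eA, eB, hysum_q j]
          by_cases h : C j <;> simp [h] <;> ring
        -- power preserved
        have hypow : powerLP Q S P y = powerLP Q S P x := by
          unfold powerLP
          have e0 : ∀ q s, P s * y q s
              = (if C q then 0 else P s * x q s)
                + (if C (q + (m : ℕ)) then P s * x (q + (m : ℕ)) s else 0) := by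
            intro q s
            rw [hy]
            by_cases h1 : C q <;> by_cases h2 : C (q + (m : ℕ)) <;> simp [h1, h2] <;> ring
          rw [Finset.sum_congr rfl (fun q _ => Finset.sum_congr rfl (fun s _ => e0 q s))]
          rw [Finset.sum_congr rfl (fun q _ => Finset.sum_add_distrib), Finset.sum_add_distrib]
          have eB : ∑ q ∈ range (Q + 1), ∑ s ∈ range (S + 1),
              (if C (q + (m : ℕ)) then P s * x (q + (m : ℕ)) s else 0)
              = ∑ k ∈ range (Q + 1), ∑ s ∈ range (S + 1), (if C k then P s * x k s else 0) := by
            rw [Finset.sum_comm]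
            have eshift : ∀ s, ∑ q ∈ range (Q + 1),
                (if C (q + (m : ℕ)) then P s * x (q + (m : ℕ)) s else 0)
                = ∑ k ∈ range (Q + 1), (if C k then P s * x k s else 0) := by
              intro s
              exact hshiftC (fun k => if C k then P s * x k s else 0)
                (fun k hk => hifC (fun k => P s * x k s) k hk)
            rw [Finset.sum_congr rfl (fun s _ => eshift s), Finset.sum_comm]
          rw [eB, ← Finset.sum_add_distrib]
          apply Finset.sum_congr rfl
          intro q _
          rw [← Finset.sum_add_distrib]
          exact Finset.sum_congr rfl fun s _ => by by_cases h : C q <;> simp [h]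
        -- delay strictly decreases
        have hmass : 0 < ∑ k ∈ range (Q + 1), (if C k then pi k else 0) := by
          have hterm : (0:ℝ) < (if C (m : ℕ) then pi (m : ℕ) else 0) := by
            rw [if_pos hCm]; exact hpm
          calc (0:ℝ) < _ := hterm
            _ ≤ _ := Finset.single_le_sum
                (f := fun k => if C k then pi k else 0)
                (fun k _ => by
                  show (0:ℝ) ≤ if C k then pi k else 0
                  by_cases h : C k
                  · rw [if_pos h]; exact hpi0 k (hCle k h).2
                  · rw [if_neg h])
                (mem_range.mpr (Nat.lt_succ_of_le hmQ))
        have hTy : ∑ q ∈ range (Q + 1), ∑ s ∈ range (S + 1), (q : ℝ) * y q s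
            = ∑ q ∈ range (Q + 1), ∑ s ∈ range (S + 1), (q : ℝ) * x q s
              - ((m : ℕ) : ℝ) * ∑ k ∈ range (Q + 1), (if C k then pi k else 0) := by
          have e0 : ∀ (q s : ℕ), (q : ℝ) * y q s
              = (if C q then 0 else (q : ℝ) * x q s)
                + ((if C (q + (m : ℕ))
                      then (((q + (m : ℕ) : ℕ)) : ℝ) * x (q + (m : ℕ)) s else 0)
                  - (if C (q + (m : ℕ)) then ((m : ℕ) : ℝ) * x (q + (m : ℕ)) s else 0)) := by
            intro q s
            rw [hy]
            by_cases h1 : C q <;> by_cases h2 : C (q + (m : ℕ)) <;>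
              simp [h1, h2] <;> push_cast <;> ring
          rw [Finset.sum_congr rfl (fun q _ => Finset.sum_congr rfl (fun s _ => e0 q s))]
          rw [Finset.sum_congr rfl (fun q _ => Finset.sum_add_distrib), Finset.sum_add_distrib]
          rw [Finset.sum_congr rfl (fun q _ => Finset.sum_sub_distrib _ _), Finset.sum_sub_distrib]
          have eS1 : ∑ q ∈ range (Q + 1), ∑ s ∈ range (S + 1),
              (if C (q + (m : ℕ))
                then (((q + (m : ℕ) : ℕ)) : ℝ) * x (q + (m : ℕ)) s else 0)
              = ∑ k ∈ range (Q + 1), ∑ s ∈ range (S + 1), (if C k then (k : ℝ) * x k s else 0) := by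
            rw [Finset.sum_comm]
            have eshift : ∀ s, ∑ q ∈ range (Q + 1),
                (if C (q + (m : ℕ))
                  then (((q + (m : ℕ) : ℕ)) : ℝ) * x (q + (m : ℕ)) s else 0)
                = ∑ k ∈ range (Q + 1), (if C k then (k : ℝ) * x k s else 0) := by
              intro s
              exact hshiftC (fun k => if C k then (k : ℝ) * x k s else 0)
                (fun k hk => hifC (fun k => (k : ℝ) * x k s) k hk)
            rw [Finset.sum_congr rfl (fun s _ => eshift s), Finset.sum_comm]
          have eS2 : ∑ q ∈ range (Q + 1), ∑ s ∈ range (S + 1),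
              (if C (q + (m : ℕ)) then ((m : ℕ) : ℝ) * x (q + (m : ℕ)) s else 0)
              = ((m : ℕ) : ℝ) * ∑ k ∈ range (Q + 1), (if C k then pi k else 0) := by
            rw [Finset.sum_comm]
            have eshift : ∀ s, ∑ q ∈ range (Q + 1),
                (if C (q + (m : ℕ)) then ((m : ℕ) : ℝ) * x (q + (m : ℕ)) s else 0)
                = ∑ k ∈ range (Q + 1), (if C k then ((m : ℕ) : ℝ) * x k s else 0) := by
              intro s
              exact hshiftC (fun k => if C k then ((m : ℕ) : ℝ) * x k s else 0)
                (fun k hk => hifC (fun k => ((m : ℕ) : ℝ) * x k s) k hk)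
            rw [Finset.sum_congr rfl (fun s _ => eshift s), Finset.sum_comm]
            rw [Finset.mul_sum]
            apply Finset.sum_congr rfl
            intro k _
            by_cases h : C k
            · simp only [if_pos h]
              rw [hpi k, Finset.mul_sum]
            · simp [h]
          rw [eS1, eS2]
          have ecomb : ∑ q ∈ range (Q + 1), ∑ s ∈ range (S + 1),
              (if C q then (0:ℝ) else (q : ℝ) * x q s)
              + ∑ k ∈ range (Q + 1), ∑ s ∈ range (S + 1), (if C k then (k : ℝ) * x k s else 0)
              = ∑ q ∈ range (Q + 1), ∑ s ∈ range (S + 1), (q : ℝ) * x q s := by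
            rw [← Finset.sum_add_distrib]
            apply Finset.sum_congr rfl
            intro q _
            rw [← Finset.sum_add_distrib]
            exact Finset.sum_congr rfl fun s _ => by by_cases h : C q <;> simp [h]
          linarith
        have hcoef : 0 < 1 / ((A : ℝ) * α) := by
          apply div_pos one_pos
          apply mul_pos _ hα0
          exact_mod_cast Nat.pos_of_ne_zero (by omega)
        have hm1 : (1:ℝ) ≤ ((m : ℕ) : ℝ) := by
          exact_mod_cast Nat.one_le_iff_ne_zero.mpr hm0
        have hydel : delayLP Q S A α y < delayLP Q S A α x := by
          unfold delayLP
          rw [hTy]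
          apply mul_lt_mul_of_pos_left _ hcoef
          nlinarith
        have hyLP : IsLP Q S A α y := ⟨hy0, hyz, hysum, hybal⟩
        have hyP : powerLP Q S P y ≤ Pth := le_of_eq hypow |>.trans hxP
        have := hxOpt y hyLP hyP
        linarith
      · have hf1 : f (m : ℕ) (sHi S (m : ℕ)) = 1 := by rw [hf, if_neg hpm, if_pos rfl]
        have h0 : sHi S (m : ℕ) = 0 := hc1 _ (min_le_left _ _) (by rw [hf1]; norm_num)
        simp only [sHi] at h0
        omega
    have hfin : (⟨0, Nat.succ_pos Q⟩ : Fin (Q + 1)) = m := by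
      apply Fin.ext; simp [hm0]
    rw [hfin]; exact him
  refine ⟨exists_recurrent (Nat.succ_pos Q) M hM0, ?_⟩
  intro i j hi hj
  exact reach_trans M hM0 (key i hi) (hj _ (key j hj))
end
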